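/- arXiv:1107.0175 — 4 statements merged into one kernel-verified Lean document; each statement's English description precedes it below -/
import Mathlib

section
/- Let d ≥ 2 be an even integer and let S_d = {χ ∈ {0,1}^d : χ_{2j-1} + χ_{2j} = 1 for each j = 1, …, d/2}. Then for all finitely supported functions a, b : ℕ^d → ℂ, |∑_{α, β ∈ ℕ^d, α+β ∈ S_d} a(α) b(β)| ≤ 2^{d/4} · ‖a‖_{ℓ²} ‖b‖_{ℓ²}. -/
open MeasureTheory Real

/-- The `ℓ²` norm `(∑_α |a(α)|²)^{1/2}` of a finitely supported `a : ℕ^d → ℂ`. -/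
noncomputable def l2norm {d : ℕ} (a : (Fin d → ℕ) →₀ ℂ) : ℝ :=
  Real.sqrt (∑ α ∈ a.support, ‖a α‖ ^ 2)

/-- The set `S_d = {χ ∈ {0,1}^d : χ_{2j-1} + χ_{2j} = 1 for each j = 1, …, d/2}`
of multi-indices (written with 0-based indexing: the pairs are `(2j, 2j+1)` for
`j = 0, …, d/2 - 1`). -/
def Sd (d : ℕ) : Set (Fin d → ℕ) :=
  {χ | (∀ k, χ k ≤ 1) ∧
    ∀ j : Fin (d / 2),
      χ ⟨2 * (j : ℕ), by have := j.isLt; omega⟩ +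
      χ ⟨2 * (j : ℕ) + 1, by have := j.isLt; omega⟩ = 1}

/-- first index of pair `j` -/
def idx0 {d : ℕ} (j : Fin (d / 2)) : Fin d := ⟨2 * (j : ℕ), by have := j.isLt; omega⟩

/-- second index of pair `j` -/
def idx1 {d : ℕ} (j : Fin (d / 2)) : Fin d := ⟨2 * (j : ℕ) + 1, by have := j.isLt; omega⟩

/-- number of zero pairs of a multi-index -/
def zc {d : ℕ} (α : Fin d → ℕ) : ℕ :=
  (Finset.univ.filter (fun j : Fin (d / 2) => α (idx0 j) = 0 ∧ α (idx1 j) = 0)).card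

lemma zc_le {d : ℕ} (α : Fin d → ℕ) : zc α ≤ d / 2 := by
  classical
  calc zc α ≤ (Finset.univ : Finset (Fin (d/2))).card := Finset.card_filter_le _ _
  _ = d / 2 := by simp

lemma zc_add {d : ℕ} {α β : Fin d → ℕ} (h : α + β ∈ Sd d) : zc α + zc β = d / 2 := by
  classical
  have hc : ∀ j : Fin (d/2), (β (idx0 j) = 0 ∧ β (idx1 j) = 0) ↔
      ¬(α (idx0 j) = 0 ∧ α (idx1 j) = 0) := by
    intro j
    have h1 := h.2 j
    have h2 := h.1 (idx0 j)
    have h3 := h.1 (idx1 j)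
    simp only [Pi.add_apply] at h1 h2 h3
    have e0 : α (idx0 j) + β (idx0 j) + (α (idx1 j) + β (idx1 j)) = 1 := h1
    omega
  have : zc β = (Finset.univ.filter
      (fun j : Fin (d/2) => ¬(α (idx0 j) = 0 ∧ α (idx1 j) = 0))).card := by
    unfold zc
    congr 1
    apply Finset.filter_congr
    intro j _
    simp [hc j]
  rw [this]
  unfold zc
  rw [Finset.card_filter_add_card_filter_not]
  simp

open scoped Classical in
lemma count_le {d : ℕ} (hdeven : Even d) (γ : Fin d → ℕ) (C : Finset (Fin d → ℕ)) :
    (C.filter (fun δ => γ + δ ∈ Sd d)).card ≤ 2 ^ zc γ := by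
  classical
  have hcard : (2 : ℕ) ^ zc γ =
      Fintype.card ({j : Fin (d/2) // γ (idx0 j) = 0 ∧ γ (idx1 j) = 0} → Fin 2) := by
    rw [Fintype.card_fun, Fintype.card_subtype, Fintype.card_fin]
    rfl
  rw [hcard, ← Finset.card_univ]
  apply Finset.card_le_card_of_injOn
    (fun δ => fun j : {j : Fin (d/2) // γ (idx0 j) = 0 ∧ γ (idx1 j) = 0} =>
      if δ (idx0 j.1) = 0 then (0 : Fin 2) else 1)
  · intro _ _; exact Finset.mem_univ _
  · intro δ₁ hδ₁ δ₂ hδ₂ hf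
    have h₁ := (Finset.mem_filter.mp hδ₁).2
    have h₂ := (Finset.mem_filter.mp hδ₂).2
    funext k
    obtain ⟨m, hm⟩ := hdeven
    have hk : (k : ℕ) < d := k.isLt
    have hj : (k : ℕ) / 2 < d / 2 := by omega
    set j : Fin (d/2) := ⟨(k : ℕ) / 2, hj⟩ with hjdef
    have hjv : (j : ℕ) = (k : ℕ) / 2 := rfl
    have hi0 : (idx0 j : ℕ) = 2 * ((k : ℕ) / 2) := rfl
    have hi1 : (idx1 j : ℕ) = 2 * ((k : ℕ) / 2) + 1 := rfl
    have hk01 : k = idx0 j ∨ k = idx1 j := by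
      rcases Nat.even_or_odd (k : ℕ) with he | ho
      · obtain ⟨t, ht⟩ := he; left; apply Fin.ext; rw [hi0]; omega
      · obtain ⟨t, ht⟩ := ho; right; apply Fin.ext; rw [hi1]; omega
    have e₁ := h₁.2 j
    have e₂ := h₂.2 j
    have b₁0 := h₁.1 (idx0 j)
    have b₁1 := h₁.1 (idx1 j)
    have b₂0 := h₂.1 (idx0 j)
    have b₂1 := h₂.1 (idx1 j)
    simp only [Pi.add_apply] at e₁ e₂ b₁0 b₁1 b₂0 b₂1
    have e₁' : γ (idx0 j) + δ₁ (idx0 j) + (γ (idx1 j) + δ₁ (idx1 j)) = 1 := e₁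
    have e₂' : γ (idx0 j) + δ₂ (idx0 j) + (γ (idx1 j) + δ₂ (idx1 j)) = 1 := e₂
    by_cases hz : γ (idx0 j) = 0 ∧ γ (idx1 j) = 0
    · -- zero pair: use injection data
      have hff := congrFun hf ⟨j, hz⟩
      simp only at hff
      have hd0 : δ₁ (idx0 j) = δ₂ (idx0 j) := by
        by_cases h1 : δ₁ (idx0 j) = 0 <;> by_cases h2 : δ₂ (idx0 j) = 0 <;>
          · simp [h1, h2] at hff ⊢ <;> omega
      have hd1 : δ₁ (idx1 j) = δ₂ (idx1 j) := by omega
      rcases hk01 with hke | hke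
      · rw [hke]; exact hd0
      · rw [hke]; exact hd1
    · -- nonzero pair: both δ are zero there
      have : δ₁ (idx0 j) = 0 ∧ δ₁ (idx1 j) = 0 ∧ δ₂ (idx0 j) = 0 ∧ δ₂ (idx1 j) = 0 := by
        omega
      rcases hk01 with hke | hke
      · rw [hke]; omega
      · rw [hke]; omega


open scoped Classical in
/-- **Schur-test bound for the Hankel form with coefficient pattern `S_d`.**
For even `d ≥ 2` and all finitely supported `a, b : ℕ^d → ℂ`,
`|∑_{α+β ∈ S_d} a(α) b(β)| ≤ 2^{d/4} ‖a‖_{ℓ²} ‖b‖_{ℓ²}`. -/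
theorem hankel_Sd_schur_bound (d : ℕ) (hd : 2 ≤ d) (hdeven : Even d)
    (a b : (Fin d → ℕ) →₀ ℂ) :
    ‖∑ α ∈ a.support, ∑ β ∈ b.support,
        (if α + β ∈ Sd d then (1 : ℂ) else 0) * a α * b β‖
      ≤ 2 ^ ((d : ℝ) / 4) * l2norm a * l2norm b := by
  classical
  set A := a.support with hA
  set B := b.support with hB
  set w : (Fin d → ℕ) → ℝ := fun γ => (2 : ℝ) ^ ((zc γ : ℝ) / 2) with hw
  have hwpos : ∀ γ, 0 < w γ := fun γ => Real.rpow_pos_of_pos two_pos _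
  set P := (A ×ˢ B).filter (fun p => p.1 + p.2 ∈ Sd d) with hP
  have hhalf : ((d / 2 : ℕ) : ℝ) = (d : ℝ) / 2 := by
    obtain ⟨m, hm⟩ := hdeven
    subst hm
    have h2 : (m + m) / 2 = m := by omega
    rw [h2]; push_cast; ring
  set u : (Fin d → ℕ) × (Fin d → ℕ) → ℝ :=
    fun p => Real.sqrt (w p.2 / w p.1) * ‖a p.1‖ with hu
  set v : (Fin d → ℕ) × (Fin d → ℕ) → ℝ :=
    fun p => Real.sqrt (w p.1 / w p.2) * ‖b p.2‖ with hv
  -- Step 1: triangle inequality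
  have step1 : ‖∑ α ∈ A, ∑ β ∈ B, (if α + β ∈ Sd d then (1 : ℂ) else 0) * a α * b β‖
      ≤ ∑ p ∈ P, ‖a p.1‖ * ‖b p.2‖ := by
    have e1 : ∑ p ∈ P, ‖a p.1‖ * ‖b p.2‖
        = ∑ α ∈ A, ∑ β ∈ B, (if α + β ∈ Sd d then ‖a α‖ * ‖b β‖ else 0) := by
      rw [hP, Finset.sum_filter, Finset.sum_product]
    rw [e1]
    refine (norm_sum_le _ _).trans (Finset.sum_le_sum fun α _ =>
      (norm_sum_le _ _).trans (Finset.sum_le_sum fun β _ => ?_))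
    by_cases h : α + β ∈ Sd d <;> simp [h]

  -- pointwise factorization
  have huv : ∀ p, ‖a p.1‖ * ‖b p.2‖ = u p * v p := by
    intro p
    have h1 : Real.sqrt (w p.2 / w p.1) * Real.sqrt (w p.1 / w p.2) = 1 := by
      rw [← Real.sqrt_mul (le_of_lt (div_pos (hwpos _) (hwpos _))), div_mul_div_comm,
        mul_comm (w p.2) (w p.1), div_self (mul_pos (hwpos _) (hwpos _)).ne', Real.sqrt_one]
    rw [hu, hv]
    dsimp only
    rw [show Real.sqrt (w p.2 / w p.1) * ‖a p.1‖ * (Real.sqrt (w p.1 / w p.2) * ‖b p.2‖)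
        = Real.sqrt (w p.2 / w p.1) * Real.sqrt (w p.1 / w p.2) * (‖a p.1‖ * ‖b p.2‖) by ring,
      h1, one_mul]
  -- Step 2: Cauchy–Schwarz
  have step2 : ∑ p ∈ P, u p * v p
      ≤ Real.sqrt (∑ p ∈ P, u p ^ 2) * Real.sqrt (∑ p ∈ P, v p ^ 2) :=
    Real.sum_mul_le_sqrt_mul_sqrt _ _ _
  -- Row bound
  have hrow : ∑ p ∈ P, u p ^ 2 ≤ 2 ^ ((d : ℝ) / 4) * ∑ α ∈ A, ‖a α‖ ^ 2 := by
    have e : ∑ p ∈ P, u p ^ 2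
        = ∑ α ∈ A, ∑ β ∈ B.filter (fun β => α + β ∈ Sd d), w β / w α * ‖a α‖ ^ 2 := by
      rw [hP, Finset.sum_filter, Finset.sum_product]
      refine Finset.sum_congr rfl fun α _ => ?_
      rw [Finset.sum_filter]
      refine Finset.sum_congr rfl fun β _ => ?_
      by_cases hc : α + β ∈ Sd d
      · simp only [hc, if_true, hu, mul_pow]
        rw [Real.sq_sqrt (le_of_lt (div_pos (hwpos _) (hwpos _)))]
      · simp [hc]
    rw [e]
    have inner : ∀ α ∈ A,
        ∑ β ∈ B.filter (fun β => α + β ∈ Sd d), w β / w α * ‖a α‖ ^ 2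
          ≤ 2 ^ ((d : ℝ) / 4) * ‖a α‖ ^ 2 := by
      intro α _
      have hconst : ∀ β ∈ B.filter (fun β => α + β ∈ Sd d),
          w β / w α * ‖a α‖ ^ 2 = 2 ^ ((d : ℝ) / 4 - (zc α : ℝ)) * ‖a α‖ ^ 2 := by
        intro β hβ
        have hmem : α + β ∈ Sd d := (Finset.mem_filter.mp hβ).2
        have hz := zc_add hmem
        have hzcast : (zc β : ℝ) = (d : ℝ) / 2 - (zc α : ℝ) := by
          have : ((zc α : ℕ) : ℝ) + ((zc β : ℕ) : ℝ) = ((d / 2 : ℕ) : ℝ) := by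
            exact_mod_cast congrArg (Nat.cast : ℕ → ℝ) hz
          rw [hhalf] at this; linarith
        have hww : w β / w α = 2 ^ ((d : ℝ) / 4 - (zc α : ℝ)) := by
          rw [hw]; dsimp only
          rw [← Real.rpow_sub two_pos]
          congr 1
          rw [hzcast]; ring
        rw [hww]
      rw [Finset.sum_congr rfl hconst, Finset.sum_const, nsmul_eq_mul]
      have hcard : (((B.filter (fun β => α + β ∈ Sd d)).card : ℕ) : ℝ)
          ≤ (2 : ℝ) ^ ((zc α : ℝ)) := by
        rw [show ((zc α : ℝ)) = ((zc α : ℕ) : ℝ) from rfl, Real.rpow_natCast]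
        exact_mod_cast count_le hdeven α B
      calc ((B.filter (fun β => α + β ∈ Sd d)).card : ℝ)
            * (2 ^ ((d : ℝ) / 4 - (zc α : ℝ)) * ‖a α‖ ^ 2)
          ≤ (2 : ℝ) ^ ((zc α : ℝ)) * (2 ^ ((d : ℝ) / 4 - (zc α : ℝ)) * ‖a α‖ ^ 2) :=
            mul_le_mul_of_nonneg_right hcard (by positivity)
        _ = 2 ^ ((d : ℝ) / 4) * ‖a α‖ ^ 2 := by
            rw [← mul_assoc, ← Real.rpow_add two_pos]
            ring_nf
    calc ∑ α ∈ A, ∑ β ∈ B.filter (fun β => α + β ∈ Sd d), w β / w α * ‖a α‖ ^ 2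
        ≤ ∑ α ∈ A, 2 ^ ((d : ℝ) / 4) * ‖a α‖ ^ 2 := Finset.sum_le_sum inner
      _ = 2 ^ ((d : ℝ) / 4) * ∑ α ∈ A, ‖a α‖ ^ 2 := (Finset.mul_sum _ _ _).symm
  -- Column bound
  have hcol : ∑ p ∈ P, v p ^ 2 ≤ 2 ^ ((d : ℝ) / 4) * ∑ β ∈ B, ‖b β‖ ^ 2 := by
    have e : ∑ p ∈ P, v p ^ 2
        = ∑ β ∈ B, ∑ α ∈ A.filter (fun α => β + α ∈ Sd d), w α / w β * ‖b β‖ ^ 2 := by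
      rw [hP, Finset.sum_filter, Finset.sum_product_right]
      refine Finset.sum_congr rfl fun β _ => ?_
      rw [Finset.sum_filter]
      refine Finset.sum_congr rfl fun α _ => ?_
      by_cases hc : α + β ∈ Sd d
      · have hc' : β + α ∈ Sd d := by rwa [add_comm]
        simp only [hc, hc', if_true, hv, mul_pow]
        rw [Real.sq_sqrt (le_of_lt (div_pos (hwpos _) (hwpos _)))]
      · have hc' : ¬ β + α ∈ Sd d := by rwa [add_comm]
        simp [hc, hc']
    rw [e]
    have inner : ∀ β ∈ B,
        ∑ α ∈ A.filter (fun α => β + α ∈ Sd d), w α / w β * ‖b β‖ ^ 2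
          ≤ 2 ^ ((d : ℝ) / 4) * ‖b β‖ ^ 2 := by
      intro β _
      have hconst : ∀ α ∈ A.filter (fun α => β + α ∈ Sd d),
          w α / w β * ‖b β‖ ^ 2 = 2 ^ ((d : ℝ) / 4 - (zc β : ℝ)) * ‖b β‖ ^ 2 := by
        intro α hα
        have hmem : β + α ∈ Sd d := (Finset.mem_filter.mp hα).2
        have hz := zc_add hmem
        have hzcast : (zc α : ℝ) = (d : ℝ) / 2 - (zc β : ℝ) := by
          have : ((zc β : ℕ) : ℝ) + ((zc α : ℕ) : ℝ) = ((d / 2 : ℕ) : ℝ) := by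
            exact_mod_cast congrArg (Nat.cast : ℕ → ℝ) hz
          rw [hhalf] at this; linarith
        have hww : w α / w β = 2 ^ ((d : ℝ) / 4 - (zc β : ℝ)) := by
          rw [hw]; dsimp only
          rw [← Real.rpow_sub two_pos]
          congr 1
          rw [hzcast]; ring
        rw [hww]
      rw [Finset.sum_congr rfl hconst, Finset.sum_const, nsmul_eq_mul]
      have hcard : (((A.filter (fun α => β + α ∈ Sd d)).card : ℕ) : ℝ)
          ≤ (2 : ℝ) ^ ((zc β : ℝ)) := by
        rw [show ((zc β : ℝ)) = ((zc β : ℕ) : ℝ) from rfl, Real.rpow_natCast]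
        exact_mod_cast count_le hdeven β A
      calc ((A.filter (fun α => β + α ∈ Sd d)).card : ℝ)
            * (2 ^ ((d : ℝ) / 4 - (zc β : ℝ)) * ‖b β‖ ^ 2)
          ≤ (2 : ℝ) ^ ((zc β : ℝ)) * (2 ^ ((d : ℝ) / 4 - (zc β : ℝ)) * ‖b β‖ ^ 2) :=
            mul_le_mul_of_nonneg_right hcard (by positivity)
        _ = 2 ^ ((d : ℝ) / 4) * ‖b β‖ ^ 2 := by
            rw [← mul_assoc, ← Real.rpow_add two_pos]
            ring_nf
    calc ∑ β ∈ B, ∑ α ∈ A.filter (fun α => β + α ∈ Sd d), w α / w β * ‖b β‖ ^ 2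
        ≤ ∑ β ∈ B, 2 ^ ((d : ℝ) / 4) * ‖b β‖ ^ 2 := Finset.sum_le_sum inner
      _ = 2 ^ ((d : ℝ) / 4) * ∑ β ∈ B, ‖b β‖ ^ 2 := (Finset.mul_sum _ _ _).symm
  -- Put it together
  have hSa : (0 : ℝ) ≤ ∑ α ∈ A, ‖a α‖ ^ 2 := Finset.sum_nonneg fun _ _ => by positivity
  have hSb : (0 : ℝ) ≤ ∑ β ∈ B, ‖b β‖ ^ 2 := Finset.sum_nonneg fun _ _ => by positivity
  have hu2 : (0 : ℝ) ≤ ∑ p ∈ P, u p ^ 2 := Finset.sum_nonneg fun _ _ => sq_nonneg _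
  have hfin : Real.sqrt (∑ p ∈ P, u p ^ 2) * Real.sqrt (∑ p ∈ P, v p ^ 2)
      ≤ 2 ^ ((d : ℝ) / 4) * l2norm a * l2norm b := by
    have m1 : Real.sqrt (∑ p ∈ P, u p ^ 2)
        ≤ Real.sqrt (2 ^ ((d : ℝ) / 4) * ∑ α ∈ A, ‖a α‖ ^ 2) := Real.sqrt_le_sqrt hrow
    have m2 : Real.sqrt (∑ p ∈ P, v p ^ 2)
        ≤ Real.sqrt (2 ^ ((d : ℝ) / 4) * ∑ β ∈ B, ‖b β‖ ^ 2) := Real.sqrt_le_sqrt hcol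
    refine (mul_le_mul m1 m2 (Real.sqrt_nonneg _) (Real.sqrt_nonneg _)).trans_eq ?_
    rw [Real.sqrt_mul (by positivity), Real.sqrt_mul (by positivity : (0:ℝ) ≤ 2 ^ ((d : ℝ) / 4))]
    have : l2norm a = Real.sqrt (∑ α ∈ A, ‖a α‖ ^ 2) := rfl
    rw [this]
    have : l2norm b = Real.sqrt (∑ β ∈ B, ‖b β‖ ^ 2) := rfl
    rw [this]
    rw [show Real.sqrt (2 ^ ((d:ℝ)/4)) * Real.sqrt (∑ α ∈ A, ‖a α‖ ^ 2)
        * (Real.sqrt (2 ^ ((d:ℝ)/4)) * Real.sqrt (∑ β ∈ B, ‖b β‖ ^ 2))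
        = Real.sqrt (2 ^ ((d:ℝ)/4)) * Real.sqrt (2 ^ ((d:ℝ)/4))
          * Real.sqrt (∑ α ∈ A, ‖a α‖ ^ 2) * Real.sqrt (∑ β ∈ B, ‖b β‖ ^ 2) by ring,
      Real.mul_self_sqrt (by positivity)]
  calc ‖∑ α ∈ A, ∑ β ∈ B, (if α + β ∈ Sd d then (1 : ℂ) else 0) * a α * b β‖
      ≤ ∑ p ∈ P, ‖a p.1‖ * ‖b p.2‖ := step1
    _ = ∑ p ∈ P, u p * v p := Finset.sum_congr rfl fun p _ => huv p
    _ ≤ Real.sqrt (∑ p ∈ P, u p ^ 2) * Real.sqrt (∑ p ∈ P, v p ^ 2) := step2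
    _ ≤ 2 ^ ((d : ℝ) / 4) * l2norm a * l2norm b := hfin
end

section
/- Let d ≥ 2 be an even integer and let S_d = {χ ∈ {0,1}^d : χ_{2j-1} + χ_{2j} = 1 for each j = 1, …, d/2}. Then the norm of the bilinear form B(a,b) = ∑_{α, β ∈ ℕ^d, α+β ∈ S_d} a(α) b(β) on finitely supported functions a, b : ℕ^d → ℂ equals exactly 2^{d/4}; that is, sup{|B(a,b)| : ‖a‖_{ℓ²} ≤ 1, ‖b‖_{ℓ²} ≤ 1} = 2^{d/4}. -/
open Real

namespace HankelAux

open Finset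

def chiOf (d : ℕ) (b : Fin (d/2) → Fin 2) : Fin d → ℕ := fun i =>
  if h : i.val / 2 < d / 2 then
    (if i.val % 2 = 0 then ((b ⟨i.val / 2, h⟩ : ℕ)) else 1 - (b ⟨i.val / 2, h⟩ : ℕ))
  else 0

def pairEquiv (d : ℕ) (hd : d % 2 = 0) : Fin (d/2) × Fin 2 ≃ Fin d where
  toFun x := ⟨2 * x.1.val + x.2.val, by have := x.1.isLt; have := x.2.isLt; omega⟩
  invFun i := (⟨i.val / 2, by have := i.isLt; omega⟩, ⟨i.val % 2, by omega⟩)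
  left_inv := by
    rintro ⟨⟨j,hj⟩,⟨p,hp⟩⟩
    refine Prod.ext (Fin.ext ?_) (Fin.ext ?_) <;> simp <;> omega
  right_inv := by
    rintro ⟨i,hi⟩
    apply Fin.ext
    simp
    omega

lemma chiOf_apply0 {d : ℕ} (b : Fin (d/2) → Fin 2) (i : Fin d) (j : Fin (d/2))
    (hij : i.val = 2 * j.val) : chiOf d b i = b j := by
  have h1 : i.val / 2 < d / 2 := by have := j.isLt; omega
  have h2 : i.val % 2 = 0 := by omega
  simp only [chiOf, dif_pos h1, if_pos h2]
  have hj : (⟨i.val / 2, h1⟩ : Fin (d/2)) = j := Fin.ext (show i.val / 2 = j.val by omega)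
  rw [hj]

lemma chiOf_apply1 {d : ℕ} (b : Fin (d/2) → Fin 2) (i : Fin d) (j : Fin (d/2))
    (hij : i.val = 2 * j.val + 1) : chiOf d b i = 1 - b j := by
  have h1 : i.val / 2 < d / 2 := by have := j.isLt; omega
  have h2 : ¬ (i.val % 2 = 0) := by omega
  simp only [chiOf, dif_pos h1, if_neg h2]
  have hj : (⟨i.val / 2, h1⟩ : Fin (d/2)) = j := Fin.ext (show i.val / 2 = j.val by omega)
  rw [hj]

lemma chiOf_le_one {d : ℕ} (b : Fin (d/2) → Fin 2) (i : Fin d) : chiOf d b i ≤ 1 := by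
  unfold chiOf
  split
  · split
    · exact Nat.lt_succ_iff.mp (Fin.isLt _)
    · omega
  · omega

lemma chiOf_mem_Sd {d : ℕ} (b : Fin (d/2) → Fin 2) : chiOf d b ∈ Sd d := by
  constructor
  · exact chiOf_le_one b
  · intro j
    rw [chiOf_apply0 b _ j rfl, chiOf_apply1 b _ j rfl]
    have := (b j).isLt
    omega

lemma chiOf_injective (d : ℕ) : Function.Injective (chiOf d) := by
  intro b b' h
  funext j
  have h2j : 2 * j.val < d := by have := j.isLt; omega
  have := congrFun h ⟨2 * j.val, h2j⟩
  rw [chiOf_apply0 b _ j rfl, chiOf_apply0 b' _ j rfl] at this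
  exact Fin.ext (by exact_mod_cast this)

lemma Sd_surj {d : ℕ} (hd : d % 2 = 0) (χ : Fin d → ℕ) (hχ : χ ∈ Sd d) :
    ∃ b : Fin (d/2) → Fin 2, chiOf d b = χ := by
  obtain ⟨hle, hpair⟩ := hχ
  refine ⟨fun j => ⟨χ ⟨2 * j.val, by have := j.isLt; omega⟩, by
    have := hle ⟨2 * j.val, by have := j.isLt; omega⟩; omega⟩, ?_⟩
  funext i
  have hi := i.isLt
  rcases Nat.even_or_odd i.val with he | ho
  · obtain ⟨k, hk⟩ := he
    have hkd : k < d / 2 := by omega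
    rw [chiOf_apply0 _ i ⟨k, hkd⟩ (by simp; omega)]
    show χ ⟨2 * k, by omega⟩ = χ i
    congr 1
    exact Fin.ext (by simp; omega)
  · obtain ⟨k, hk⟩ := ho
    have hkd : k < d / 2 := by omega
    rw [chiOf_apply1 _ i ⟨k, hkd⟩ (by simp; omega)]
    have := hpair ⟨k, hkd⟩
    have hle1 := hle ⟨2 * k, by omega⟩
    simp at this ⊢
    have : χ ⟨2*k, by omega⟩ + χ ⟨2*k+1, by omega⟩ = 1 := this
    have hχi : χ i = χ ⟨2*k+1, by omega⟩ := by congr 1; exact Fin.ext (by simpa using hk)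
    omega

open scoped Classical

lemma pairEquiv_val {d : ℕ} (hd : d % 2 = 0) (j : Fin (d/2)) (p : Fin 2) :
    (pairEquiv d hd (j, p)).val = 2 * j.val + p.val := rfl

lemma sum_pair {d : ℕ} (hd : d % 2 = 0) (f : Fin d → ℕ) :
    ∑ i, f i = ∑ j : Fin (d/2), (f (pairEquiv d hd (j, 0)) + f (pairEquiv d hd (j, 1))) := by
  rw [← Equiv.sum_comp (pairEquiv d hd) f, Fintype.sum_prod_type]
  exact Finset.sum_congr rfl fun j _ => by rw [Fin.sum_univ_two]

lemma sum_chiOf {d : ℕ} (hd : d % 2 = 0) (b : Fin (d/2) → Fin 2) :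
    ∑ i, chiOf d b i = d / 2 := by
  rw [sum_pair hd]
  have h : ∀ j : Fin (d/2),
      chiOf d b (pairEquiv d hd (j,0)) + chiOf d b (pairEquiv d hd (j,1)) = 1 := by
    intro j
    rw [chiOf_apply0 b _ j (by simp [pairEquiv_val]), chiOf_apply1 b _ j (by simp [pairEquiv_val])]
    have := (b j).isLt; omega
  simp [h]

lemma pair_card (p q : ℕ) :
    ((Finset.univ : Finset (Fin 2)).filter
        (fun x : Fin 2 => p ≤ (x:ℕ) ∧ q ≤ 1 - (x:ℕ))).card * 2 ^ (p + q) ≤ 2 := by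
  rcases Nat.lt_or_ge (p+q) 1 with h | h
  · have hp : p = 0 := by omega
    have hq : q = 0 := by omega
    subst hp; subst hq
    calc ((Finset.univ : Finset (Fin 2)).filter
          (fun x : Fin 2 => 0 ≤ (x:ℕ) ∧ 0 ≤ 1 - (x:ℕ))).card * 2 ^ (0 + 0)
        ≤ (Finset.univ : Finset (Fin 2)).card * 2 ^ (0+0) :=
          Nat.mul_le_mul_right _ (Finset.card_filter_le _ _)
      _ = 2 := by simp
  rcases Nat.lt_or_ge (p+q) 2 with h2 | h2
  · have hcard : ((Finset.univ : Finset (Fin 2)).filter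
        (fun x : Fin 2 => p ≤ (x:ℕ) ∧ q ≤ 1 - (x:ℕ))).card ≤ 1 := by
      refine Finset.card_le_one.mpr ?_
      intro x hx y hy
      simp only [Finset.mem_filter] at hx hy
      have hx1 := x.isLt; have hy1 := y.isLt
      apply Fin.ext
      omega
    have hpq : p + q = 1 := by omega
    calc ((Finset.univ : Finset (Fin 2)).filter
          (fun x : Fin 2 => p ≤ (x:ℕ) ∧ q ≤ 1 - (x:ℕ))).card * 2 ^ (p + q)
        ≤ 1 * 2 ^ (p+q) := Nat.mul_le_mul_right _ hcard
      _ ≤ 2 := by rw [one_mul, hpq]; norm_num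
  · have hempty : ((Finset.univ : Finset (Fin 2)).filter
        (fun x : Fin 2 => p ≤ (x:ℕ) ∧ q ≤ 1 - (x:ℕ))) = ∅ := by
      refine Finset.filter_eq_empty_iff.mpr ?_
      intro x _
      have := x.isLt
      omega
    rw [hempty]
    simp

lemma N_bound {d : ℕ} (hd : d % 2 = 0) (α : Fin d → ℕ) :
    ((Finset.univ : Finset (Fin (d/2) → Fin 2)).filter
        (fun b => ∀ i, α i ≤ chiOf d b i)).card * 2 ^ (∑ i, α i) ≤ 2 ^ (d/2) := by
  set P : Fin (d/2) → Fin 2 → Prop := fun j x =>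
    α (pairEquiv d hd (j,0)) ≤ (x:ℕ) ∧ α (pairEquiv d hd (j,1)) ≤ 1 - (x:ℕ) with hP
  have hiff : ∀ b : Fin (d/2) → Fin 2, (∀ i, α i ≤ chiOf d b i) ↔ ∀ j, P j (b j) := by
    intro b
    constructor
    · intro h j
      constructor
      · have := h (pairEquiv d hd (j,0))
        rwa [chiOf_apply0 b _ j (by simp [pairEquiv_val])] at this
      · have := h (pairEquiv d hd (j,1))
        rwa [chiOf_apply1 b _ j (by simp [pairEquiv_val])] at this
    · intro h i
      obtain ⟨⟨j, p⟩, rfl⟩ := (pairEquiv d hd).surjective i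
      fin_cases p
      · rw [chiOf_apply0 b _ j (by simp [pairEquiv_val])]
        exact (h j).1
      · rw [chiOf_apply1 b _ j (by simp [pairEquiv_val])]
        exact (h j).2
  have hcard : ((Finset.univ : Finset (Fin (d/2) → Fin 2)).filter
      (fun b => ∀ i, α i ≤ chiOf d b i)).card
      = ∏ j : Fin (d/2), ((Finset.univ : Finset (Fin 2)).filter (fun x => P j x)).card := by
    rw [Finset.filter_congr (fun b _ => hiff b)]
    have e1 : ((Finset.univ : Finset (Fin (d/2) → Fin 2)).filter
        (fun b => ∀ j, P j (b j))).card = Fintype.card {b : Fin (d/2) → Fin 2 // ∀ j, P j (b j)} := by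
      rw [Fintype.card_subtype]
    rw [e1, Fintype.card_congr (Equiv.subtypePiEquivPi (p := P)), Fintype.card_pi]
    exact Finset.prod_congr rfl fun j _ => Fintype.card_subtype _
  have hsum : (2:ℕ) ^ (∑ i, α i)
      = ∏ j : Fin (d/2), 2 ^ (α (pairEquiv d hd (j,0)) + α (pairEquiv d hd (j,1))) := by
    rw [Finset.prod_pow_eq_pow_sum, sum_pair hd]
  rw [hcard, hsum, ← Finset.prod_mul_distrib]
  calc (∏ j : Fin (d/2), (((Finset.univ : Finset (Fin 2)).filter (fun x => P j x)).card
          * 2 ^ (α (pairEquiv d hd (j,0)) + α (pairEquiv d hd (j,1)))))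
      ≤ ∏ _j : Fin (d/2), 2 := Finset.prod_le_prod' fun j _ => pair_card _ _
    _ = 2 ^ (d/2) := by simp

noncomputable def Sfin (d : ℕ) : Finset (Fin d → ℕ) :=
  (Finset.univ : Finset (Fin (d/2) → Fin 2)).image (chiOf d)

lemma card_Sfin (d : ℕ) : (Sfin d).card = 2 ^ (d/2) := by
  rw [Sfin, Finset.card_image_of_injective _ (chiOf_injective d)]
  rw [Finset.card_univ, Fintype.card_fun, Fintype.card_fin, Fintype.card_fin]

lemma mem_Sfin_iff {d : ℕ} (hd : d % 2 = 0) (χ : Fin d → ℕ) : χ ∈ Sfin d ↔ χ ∈ Sd d := by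
  constructor
  · intro h
    simp only [Sfin, Finset.mem_image] at h
    obtain ⟨b, _, rfl⟩ := h
    exact chiOf_mem_Sd b
  · intro h
    obtain ⟨b, rfl⟩ := Sd_surj hd χ h
    simp only [Sfin, Finset.mem_image]
    exact ⟨b, Finset.mem_univ b, rfl⟩

lemma sum_of_mem_Sd {d : ℕ} (hd : d % 2 = 0) (χ : Fin d → ℕ) (h : χ ∈ Sd d) :
    ∑ i, χ i = d / 2 := by
  obtain ⟨b, rfl⟩ := Sd_surj hd χ h
  exact sum_chiOf hd b

def bOf (d : ℕ) (χ : Fin d → ℕ) : Fin (d/2) → Fin 2 := fun j =>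
  if χ ⟨2 * j.val, by have := j.isLt; omega⟩ = 0 then 0 else 1

lemma bOf_chiOf {d : ℕ} (b : Fin (d/2) → Fin 2) : bOf d (chiOf d b) = b := by
  funext j
  unfold bOf
  rw [chiOf_apply0 b ⟨2 * j.val, by have := j.isLt; omega⟩ j rfl]
  have hlt := (b j).isLt
  split <;> (apply Fin.ext; omega)

lemma chiOf_bOf {d : ℕ} (hd : d % 2 = 0) (χ : Fin d → ℕ) (h : χ ∈ Sd d) :
    chiOf d (bOf d χ) = χ := by
  obtain ⟨b, rfl⟩ := Sd_surj hd χ h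
  rw [bOf_chiOf]

lemma row_bound {d : ℕ} (hd : d % 2 = 0) (α : Fin d → ℕ) (F : Finset (Fin d → ℕ)) :
    ∑ β ∈ F, (if α + β ∈ Sd d then ((Real.sqrt 2)⁻¹) ^ (∑ i, β i) else 0)
      ≤ Real.sqrt 2 ^ (d/2) * ((Real.sqrt 2)⁻¹) ^ (∑ i, α i) := by
  have hs0 : (0:ℝ) < Real.sqrt 2 := Real.sqrt_pos.mpr (by norm_num)
  have hs2 : Real.sqrt 2 * Real.sqrt 2 = 2 := Real.mul_self_sqrt (by norm_num)
  set s : ℝ := Real.sqrt 2 with hs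
  set m := d / 2 with hm
  set k := ∑ i, α i with hk
  have hRHSpos : 0 < s ^ m * (s⁻¹) ^ k := by positivity
  rw [← Finset.sum_filter]
  set T := F.filter (fun β => α + β ∈ Sd d) with hT
  rcases Finset.eq_empty_or_nonempty T with hTe | hTne
  · rw [hTe]; simpa using hRHSpos.le
  -- every β in T has ∑ β = m - k and k ≤ m
  obtain ⟨β₀, hβ₀⟩ := hTne
  have hmem : ∀ β ∈ T, α + β ∈ Sd d := fun β hβ => (Finset.mem_filter.mp hβ).2
  have hsum : ∀ β ∈ T, k + ∑ i, β i = m := by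
    intro β hβ
    have h1 := sum_of_mem_Sd hd _ (hmem β hβ)
    have h2 : ∑ i, (α + β) i = k + ∑ i, β i := by
      rw [hk, ← Finset.sum_add_distrib]
      exact Finset.sum_congr rfl fun i _ => rfl
    omega
  have hkm : k ≤ m := by have := hsum β₀ hβ₀; omega
  have hβsum : ∀ β ∈ T, ∑ i, β i = m - k := fun β hβ => by have := hsum β hβ; omega
  have hconst : ∑ β ∈ T, (s⁻¹) ^ (∑ i, β i) = T.card * (s⁻¹) ^ (m - k) := by
    rw [Finset.sum_congr rfl (fun β hβ => by rw [hβsum β hβ])]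
    rw [Finset.sum_const, nsmul_eq_mul]
  rw [hconst]
  -- card bound
  have hcard : T.card ≤ ((Finset.univ : Finset (Fin (d/2) → Fin 2)).filter
      (fun b => ∀ i, α i ≤ chiOf d b i)).card := by
    apply Finset.card_le_card_of_injOn (fun β => bOf d (α + β))
    · intro β hβ
      simp only [Finset.mem_coe, Finset.mem_filter, Finset.mem_univ, true_and]
      intro i
      rw [chiOf_bOf hd _ (hmem β hβ)]
      exact Nat.le_add_right _ _
    · intro β₁ h₁ β₂ h₂ hb
      have e1 : α + β₁ = α + β₂ := by
        rw [← chiOf_bOf hd _ (hmem β₁ h₁), ← chiOf_bOf hd _ (hmem β₂ h₂)]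
        exact congrArg (chiOf d) hb
      funext i
      have := congrFun e1 i
      simp only [Pi.add_apply] at this
      omega
  have hN := N_bound hd α
  have hNk : T.card ≤ 2 ^ (m - k) := by
    have h2 : T.card * 2 ^ k ≤ 2 ^ (m - k) * 2 ^ k := by
      rw [← pow_add, Nat.sub_add_cancel hkm]
      exact le_trans (Nat.mul_le_mul_right _ hcard) hN
    exact Nat.le_of_mul_le_mul_right h2 (pow_pos (by norm_num : (0:ℕ) < 2) k)
  -- real arithmetic
  have h2c : (2:ℝ) * s⁻¹ = s := by
    field_simp
    linarith [hs2]
  calc (T.card : ℝ) * (s⁻¹) ^ (m - k)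
      ≤ (2:ℝ) ^ (m - k) * (s⁻¹) ^ (m - k) := by
        apply mul_le_mul_of_nonneg_right _ (by positivity)
        exact_mod_cast hNk
    _ = ((2:ℝ) * s⁻¹) ^ (m - k) := (mul_pow _ _ _).symm
    _ = s ^ (m - k) := by rw [h2c]
    _ = s ^ m * (s⁻¹) ^ k := by
        rw [inv_pow, pow_sub₀ s (ne_of_gt hs0) hkm]

lemma sum_sq_le_one {d : ℕ} (a : (Fin d → ℕ) →₀ ℂ) (ha : l2norm a ≤ 1) :
    ∑ α ∈ a.support, ‖a α‖ ^ 2 ≤ 1 := by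
  have h0 : (0:ℝ) ≤ ∑ α ∈ a.support, ‖a α‖ ^ 2 :=
    Finset.sum_nonneg fun α _ => sq_nonneg _
  have h1 := Real.sq_sqrt h0
  have ha' : Real.sqrt (∑ α ∈ a.support, ‖a α‖ ^ 2) ≤ 1 := ha
  nlinarith [Real.sqrt_nonneg (∑ α ∈ a.support, ‖a α‖ ^ 2)]

lemma schur_bound {d : ℕ} (hd : d % 2 = 0) (a b : (Fin d → ℕ) →₀ ℂ)
    (ha : l2norm a ≤ 1) (hb : l2norm b ≤ 1) :
    ‖∑ α ∈ a.support, ∑ β ∈ b.support,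
        (if α + β ∈ Sd d then (1 : ℂ) else 0) * a α * b β‖ ≤ Real.sqrt 2 ^ (d/2) := by
  have hs0 : (0:ℝ) < Real.sqrt 2 := Real.sqrt_pos.mpr (by norm_num)
  set s : ℝ := Real.sqrt 2 with hs
  set w : (Fin d → ℕ) → ℝ := fun γ => (s⁻¹) ^ (∑ i, γ i) with hw
  have hw0 : ∀ γ, 0 < w γ := fun γ => by positivity
  set Λ : ℝ := s ^ (d/2) with hΛ
  have hΛ0 : 0 < Λ := by positivity
  set A := a.support with hA
  set B := b.support with hB
  set f : (Fin d → ℕ) × (Fin d → ℕ) → ℝ := fun x =>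
    Real.sqrt ((if x.1 + x.2 ∈ Sd d then w x.2 else 0) / w x.1) * ‖a x.1‖ with hf
  set g : (Fin d → ℕ) × (Fin d → ℕ) → ℝ := fun x =>
    Real.sqrt ((if x.1 + x.2 ∈ Sd d then w x.1 else 0) / w x.2) * ‖b x.2‖ with hg
  have step1 : ‖∑ α ∈ A, ∑ β ∈ B, (if α + β ∈ Sd d then (1 : ℂ) else 0) * a α * b β‖
      ≤ ∑ x ∈ A ×ˢ B, f x * g x := by
    have hfg : ∀ x : (Fin d → ℕ) × (Fin d → ℕ),
        f x * g x = (if x.1 + x.2 ∈ Sd d then (1:ℝ) else 0) * (‖a x.1‖ * ‖b x.2‖) := by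
      intro x
      by_cases hx : x.1 + x.2 ∈ Sd d
      · simp only [hf, hg, if_pos hx]
        have h1 : Real.sqrt (w x.2 / w x.1) * Real.sqrt (w x.1 / w x.2) = 1 := by
          rw [← Real.sqrt_mul (by positivity)]
          rw [show w x.2 / w x.1 * (w x.1 / w x.2) = 1 by
            field_simp; exact div_self (mul_pos (hw0 _) (hw0 _)).ne']
          exact Real.sqrt_one
        calc Real.sqrt (w x.2 / w x.1) * ‖a x.1‖ * (Real.sqrt (w x.1 / w x.2) * ‖b x.2‖)
            = (Real.sqrt (w x.2 / w x.1) * Real.sqrt (w x.1 / w x.2)) * (‖a x.1‖ * ‖b x.2‖) := by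
              ring
          _ = 1 * (‖a x.1‖ * ‖b x.2‖) := by rw [h1]
      · simp [hf, hg, if_neg hx]
    calc ‖∑ α ∈ A, ∑ β ∈ B, (if α + β ∈ Sd d then (1 : ℂ) else 0) * a α * b β‖
        ≤ ∑ α ∈ A, ‖∑ β ∈ B, (if α + β ∈ Sd d then (1 : ℂ) else 0) * a α * b β‖ :=
          norm_sum_le _ _
      _ ≤ ∑ α ∈ A, ∑ β ∈ B, ‖(if α + β ∈ Sd d then (1 : ℂ) else 0) * a α * b β‖ :=
          Finset.sum_le_sum fun α _ => norm_sum_le _ _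
      _ = ∑ α ∈ A, ∑ β ∈ B, (if α + β ∈ Sd d then (1:ℝ) else 0) * (‖a α‖ * ‖b β‖) := by
          refine Finset.sum_congr rfl fun α _ => Finset.sum_congr rfl fun β _ => ?_
          by_cases hx : α + β ∈ Sd d <;> simp [hx, norm_mul]
      _ = ∑ x ∈ A ×ˢ B, (if x.1 + x.2 ∈ Sd d then (1:ℝ) else 0) * (‖a x.1‖ * ‖b x.2‖) :=
          (Finset.sum_product' ..).symm
      _ = ∑ x ∈ A ×ˢ B, f x * g x := by
          exact Finset.sum_congr rfl fun x _ => (hfg x).symm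
  have hF2 : ∑ x ∈ A ×ˢ B, f x ^ 2 ≤ Λ := by
    have hfx : ∀ x : (Fin d → ℕ) × (Fin d → ℕ),
        f x ^ 2 = (if x.1 + x.2 ∈ Sd d then w x.2 else 0) * (‖a x.1‖ ^2 / w x.1) := by
      intro x
      rw [hf, mul_pow, Real.sq_sqrt (by positivity)]
      ring
    have e0 : ∑ x ∈ A ×ˢ B, f x ^ 2
        = ∑ α ∈ A, ∑ β ∈ B, (if α + β ∈ Sd d then w β else 0) * (‖a α‖^2 / w α) := by
      rw [← Finset.sum_product']
      exact Finset.sum_congr rfl fun x _ => hfx x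
    calc ∑ x ∈ A ×ˢ B, f x ^ 2
        = ∑ α ∈ A, (∑ β ∈ B, (if α + β ∈ Sd d then w β else 0)) * (‖a α‖^2 / w α) := by
          rw [e0]
          exact Finset.sum_congr rfl fun α _ => (Finset.sum_mul _ _ _).symm
      _ ≤ ∑ α ∈ A, (Λ * w α) * (‖a α‖^2 / w α) := by
          refine Finset.sum_le_sum fun α _ => ?_
          exact mul_le_mul_of_nonneg_right (row_bound hd α B) (by positivity)
      _ = ∑ α ∈ A, Λ * ‖a α‖^2 := by
          refine Finset.sum_congr rfl fun α _ => ?_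
          field_simp
          exact mul_div_cancel_left₀ _ (hw0 α).ne'
      _ = Λ * ∑ α ∈ A, ‖a α‖^2 := (Finset.mul_sum _ _ _).symm
      _ ≤ Λ * 1 := by
          exact mul_le_mul_of_nonneg_left (sum_sq_le_one a ha) hΛ0.le
      _ = Λ := mul_one Λ
  have hG2 : ∑ x ∈ A ×ˢ B, g x ^ 2 ≤ Λ := by
    have hgx : ∀ x : (Fin d → ℕ) × (Fin d → ℕ),
        g x ^ 2 = (if x.1 + x.2 ∈ Sd d then w x.1 else 0) * (‖b x.2‖ ^2 / w x.2) := by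
      intro x
      rw [hg, mul_pow, Real.sq_sqrt (by positivity)]
      ring
    have e0 : ∑ x ∈ A ×ˢ B, g x ^ 2
        = ∑ α ∈ A, ∑ β ∈ B, (if α + β ∈ Sd d then w α else 0) * (‖b β‖^2 / w β) := by
      rw [← Finset.sum_product']
      exact Finset.sum_congr rfl fun x _ => hgx x
    calc ∑ x ∈ A ×ˢ B, g x ^ 2
        = ∑ β ∈ B, (∑ α ∈ A, (if α + β ∈ Sd d then w α else 0)) * (‖b β‖^2 / w β) := by
          rw [e0, Finset.sum_comm]
          exact Finset.sum_congr rfl fun β _ => (Finset.sum_mul _ _ _).symm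
      _ ≤ ∑ β ∈ B, (Λ * w β) * (‖b β‖^2 / w β) := by
          refine Finset.sum_le_sum fun β _ => ?_
          refine mul_le_mul_of_nonneg_right ?_ (by positivity)
          have hcomm : ∀ α : Fin d → ℕ, (if α + β ∈ Sd d then w α else 0)
              = (if β + α ∈ Sd d then w α else 0) := by
            intro α; rw [add_comm]
          rw [Finset.sum_congr rfl fun α _ => hcomm α]
          exact row_bound hd β A
      _ = ∑ β ∈ B, Λ * ‖b β‖^2 := by
          refine Finset.sum_congr rfl fun β _ => ?_
          field_simp
          exact mul_div_cancel_left₀ _ (hw0 β).ne'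
      _ = Λ * ∑ β ∈ B, ‖b β‖^2 := (Finset.mul_sum _ _ _).symm
      _ ≤ Λ * 1 := mul_le_mul_of_nonneg_left (sum_sq_le_one b hb) hΛ0.le
      _ = Λ := mul_one Λ
  have hCS := Finset.sum_mul_sq_le_sq_mul_sq (A ×ˢ B) f g
  have hfg0 : (0:ℝ) ≤ ∑ x ∈ A ×ˢ B, f x * g x := by
    refine Finset.sum_nonneg fun x _ => mul_nonneg ?_ ?_ <;>
      exact mul_nonneg (Real.sqrt_nonneg _) (norm_nonneg _)
  have hsq : (∑ x ∈ A ×ˢ B, f x * g x) ^ 2 ≤ Λ ^ 2 := by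
    calc (∑ x ∈ A ×ˢ B, f x * g x) ^ 2
        ≤ (∑ x ∈ A ×ˢ B, f x ^ 2) * (∑ x ∈ A ×ˢ B, g x ^ 2) := hCS
      _ ≤ Λ * Λ := by
          refine mul_le_mul hF2 hG2 (Finset.sum_nonneg fun x _ => sq_nonneg _) hΛ0.le
      _ = Λ ^ 2 := (sq Λ).symm
  have hfinal : ∑ x ∈ A ×ˢ B, f x * g x ≤ Λ := by
    nlinarith
  exact le_trans step1 hfinal

lemma spow (d : ℕ) (hd2 : d % 2 = 0) : Real.sqrt 2 ^ (d/2) = (2:ℝ) ^ ((d : ℝ)/4) := by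
  have h1 : Real.sqrt 2 = (2:ℝ) ^ ((1:ℝ)/2) := Real.sqrt_eq_rpow 2
  rw [h1, ← Real.rpow_natCast ((2:ℝ) ^ ((1:ℝ)/2)) (d/2),
    ← Real.rpow_mul (by norm_num : (0:ℝ) ≤ 2)]
  congr 1
  have h2 : ((d/2 : ℕ) : ℝ) * 2 = (d : ℝ) := by
    rw [show ((2:ℝ) = ((2:ℕ):ℝ)) by norm_num, ← Nat.cast_mul,
      Nat.div_mul_cancel (Nat.dvd_of_mod_eq_zero hd2)]
  linarith

lemma witness {d : ℕ} (hd : d % 2 = 0) :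
    ∃ a b : (Fin d → ℕ) →₀ ℂ, l2norm a ≤ 1 ∧ l2norm b ≤ 1 ∧
      ‖∑ α ∈ a.support, ∑ β ∈ b.support,
        (if α + β ∈ Sd d then (1 : ℂ) else 0) * a α * b β‖ = Real.sqrt 2 ^ (d/2) := by
  have hs0 : (0:ℝ) < Real.sqrt 2 := Real.sqrt_pos.mpr (by norm_num)
  set s : ℝ := Real.sqrt 2 with hs
  have hsm : s ^ (d/2) * s ^ (d/2) = 2 ^ (d/2) := by
    rw [← mul_pow, Real.mul_self_sqrt (by norm_num)]
  set c₀ : ℝ := (s ^ (d/2))⁻¹ with hc₀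
  have hc₀0 : 0 < c₀ := by positivity
  have hc₀C : ((c₀ : ℂ)) ≠ 0 := by
    simp only [ne_eq, Complex.ofReal_eq_zero]
    exact ne_of_gt hc₀0
  set a : (Fin d → ℕ) →₀ ℂ := Finsupp.indicator (Sfin d) (fun _ _ => (c₀ : ℂ)) with ha
  set b : (Fin d → ℕ) →₀ ℂ := Finsupp.single 0 1 with hb
  have hsd : s ^ (d/2) ≠ 0 := by positivity
  have hasupp : a.support = Sfin d := by
    ext χ
    rw [Finsupp.mem_support_iff, ha, Finsupp.indicator_apply]
    constructor
    · intro h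
      by_contra hχ
      rw [dif_neg hχ] at h
      exact h rfl
    · intro h
      rw [dif_pos h]
      exact hc₀C
  have hbsupp : b.support = {0} := Finsupp.support_single_ne_zero _ one_ne_zero
  have haval : ∀ χ ∈ Sfin d, a χ = (c₀ : ℂ) := by
    intro χ hχ
    rw [ha, Finsupp.indicator_apply, dif_pos hχ]
  refine ⟨a, b, ?_, ?_, ?_⟩
  · unfold l2norm
    rw [hasupp]
    have hv : ∀ χ ∈ Sfin d, ‖a χ‖ ^ 2 = c₀^2 := by
      intro χ hχ
      rw [haval χ hχ, Complex.norm_real, Real.norm_eq_abs, abs_of_pos hc₀0]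
    rw [Finset.sum_congr rfl hv, Finset.sum_const, card_Sfin, nsmul_eq_mul]
    have h1 : ((2^(d/2):ℕ):ℝ) * c₀^2 = 1 := by
      push_cast
      rw [hc₀, ← hsm]
      field_simp
    rw [h1, Real.sqrt_one]
  · unfold l2norm
    rw [hbsupp, Finset.sum_singleton, hb, Finsupp.single_eq_same]
    simp
  · rw [hasupp, hbsupp]
    have hterm : ∀ χ ∈ Sfin d, ∑ β ∈ ({0} : Finset (Fin d → ℕ)),
        (if χ + β ∈ Sd d then (1 : ℂ) else 0) * a χ * b β = (c₀ : ℂ) := by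
      intro χ hχ
      rw [Finset.sum_singleton]
      have h1 : χ + 0 = χ := add_zero χ
      rw [h1, if_pos ((mem_Sfin_iff hd χ).mp hχ), haval χ hχ, hb, Finsupp.single_eq_same]
      ring
    rw [Finset.sum_congr rfl hterm, Finset.sum_const, card_Sfin, nsmul_eq_mul]
    rw [show ((2^(d/2) : ℕ) : ℂ) * (c₀:ℂ) = ((2^(d/2) * c₀ : ℝ) : ℂ) by push_cast; ring]
    rw [Complex.norm_real, Real.norm_eq_abs, abs_of_pos (by positivity)]
    rw [hc₀, ← hsm]
    rw [mul_inv_cancel_right₀ hsd]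

end HankelAux

open scoped Classical in
/-- **The norm of the Hankel form with coefficient pattern `S_d` is exactly `2^{d/4}`:**
`sup {|B(a,b)| : ‖a‖_{ℓ²} ≤ 1, ‖b‖_{ℓ²} ≤ 1} = 2^{d/4}`, where
`B(a,b) = ∑_{α+β ∈ S_d} a(α) b(β)`. -/
theorem hankel_Sd_norm_eq (d : ℕ) (hd : 2 ≤ d) (hdeven : Even d) :
    sSup {r : ℝ | ∃ a b : (Fin d → ℕ) →₀ ℂ, l2norm a ≤ 1 ∧ l2norm b ≤ 1 ∧
        r = ‖∑ α ∈ a.support, ∑ β ∈ b.support,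
              (if α + β ∈ Sd d then (1 : ℂ) else 0) * a α * b β‖}
      = 2 ^ ((d : ℝ) / 4) := by
  have hd2 : d % 2 = 0 := Nat.even_iff.mp hdeven
  apply le_antisymm
  · refine Real.sSup_le ?_ (by positivity)
    rintro r ⟨a, b, ha, hb, rfl⟩
    rw [← HankelAux.spow d hd2]
    exact HankelAux.schur_bound hd2 a b ha hb
  · obtain ⟨a, b, ha, hb, hv⟩ := HankelAux.witness (d := d) hd2
    refine le_csSup ⟨(2:ℝ) ^ ((d:ℝ)/4), ?_⟩ ?_
    · rintro r ⟨a', b', ha', hb', rfl⟩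
      rw [← HankelAux.spow d hd2]
      exact HankelAux.schur_bound hd2 a' b' ha' hb'
    · exact ⟨a, b, ha, hb, by rw [hv]; exact (HankelAux.spow d hd2).symm⟩
end

section
/- Let d ≥ 2 be an even integer and let S_d = {χ ∈ {0,1}^d : χ_{2j-1} + χ_{2j} = 1 for each j = 1, …, d/2}. If φ ∈ L^∞(𝕋^d) satisfies φ̂(χ) = 1 for every χ ∈ S_d, then ‖φ‖_{L^∞(𝕋^d)} ≥ (π/2)^{d/2}. -/
open MeasureTheory Real

/-- Normalized Haar probability measure on the `d`-dimensional torus `𝕋^d`,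
modelled as `Fin d → AddCircle 1`. -/
noncomputable def torusMeasure (d : ℕ) : Measure (Fin d → AddCircle (1 : ℝ)) :=
  Measure.pi fun _ => AddCircle.haarAddCircle

/-- The Fourier coefficient `φ̂(α) = ∫_{𝕋^d} φ(z) z^{-α} dm(z)`, where
`z^α = ∏_j z_j^{α_j}` is the monomial `x ↦ ∏_j fourier (α j) (x j)`. -/
noncomputable def fourierCoef {d : ℕ} (φ : (Fin d → AddCircle (1 : ℝ)) → ℂ)
    (α : Fin d → ℤ) : ℂ :=
  ∫ x, φ x * ∏ j, fourier (-(α j)) (x j) ∂(torusMeasure d)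

instance factZeroLtOneReal : Fact ((0:ℝ) < 1) := ⟨one_pos⟩

lemma haar_eq_vol : (AddCircle.haarAddCircle : Measure (AddCircle (1:ℝ))) = volume := by
  rw [AddCircle.volume_eq_smul_haarAddCircle]; simp

instance : IsProbabilityMeasure (volume : Measure (AddCircle (1:ℝ))) := by
  rw [← haar_eq_vol]; infer_instance

lemma norm_fourier_apply {T : ℝ} [hT : Fact (0 < T)] (n : ℤ) (x : AddCircle T) :
    ‖(fourier n x : ℂ)‖ = 1 := by
  rw [fourier_apply, Circle.norm_coe]

lemma fourier_one_add (a b : AddCircle (1:ℝ)) :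
    (fourier 1 (a + b) : ℂ) = fourier 1 a * fourier 1 b := by
  simp only [fourier_apply, one_zsmul, AddCircle.toCircle_add, Circle.coe_mul]

lemma norm_one_add_fourier_coe (s : ℝ) :
    ‖1 + (fourier 1 ((s : ℝ) : AddCircle (1:ℝ)) : ℂ)‖ = 2 * |Real.cos (π * s)| := by
  rw [fourier_coe_apply]
  have h1 : (2 * (π:ℂ) * Complex.I * ((1:ℤ):ℂ) * (s:ℂ) / ((1:ℝ):ℂ)) = 2 * ((π * s : ℝ) : ℂ) * Complex.I := by push_cast; ring
  rw [h1]
  set θ : ℝ := π * s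
  have key : (1 : ℂ) + Complex.exp (2 * (θ:ℂ) * Complex.I)
      = Complex.exp ((θ:ℂ) * Complex.I) * (2 * Complex.cos (θ:ℂ)) := by
    have e2 : Complex.exp (2 * (θ:ℂ) * Complex.I)
        = Complex.exp ((θ:ℂ) * Complex.I) * Complex.exp (Complex.I * (θ:ℂ)) := by
      rw [← Complex.exp_add]; ring_nf
    have e0 : Complex.exp ((θ:ℂ) * Complex.I) * Complex.exp (-(θ:ℂ) * Complex.I) = 1 := by
      rw [← Complex.exp_add]; ring_nf; exact Complex.exp_zero
    have e1 : Complex.exp (Complex.I * (θ:ℂ)) = Complex.exp ((θ:ℂ) * Complex.I) := by ring_nf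
    rw [Complex.cos, e2, e1]
    linear_combination -e0
  rw [key, norm_mul, Complex.norm_exp_ofReal_mul_I, one_mul,
    ← Complex.ofReal_cos, norm_mul, Complex.norm_real, Real.norm_eq_abs]
  norm_num

lemma integral_cos_pi (a b : ℝ) :
    ∫ s in a..b, Real.cos (π * s) = (Real.sin (π * b) - Real.sin (π * a)) / π := by
  rw [intervalIntegral.integral_comp_mul_left Real.cos pi_ne_zero, integral_cos, smul_eq_mul]
  field_simp

lemma integral_two_abs_cos : (∫ s in (0:ℝ)..1, 2 * |Real.cos (π * s)|) = 4 / π := by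
  have hc : ∀ c : ℝ, IntervalIntegrable (fun s => 2 * |Real.cos (π * s)|) volume c 1 := by
    intro c
    exact (Continuous.intervalIntegrable (by continuity) _ _)
  have hsplit := intervalIntegral.integral_add_adjacent_intervals (a := (0:ℝ)) (b := 1/2) (c := 1)
    ((hc 0).mono_set (by rw [Set.uIcc_subset_uIcc_iff_le] <;> norm_num)) (hc (1/2))
  rw [← hsplit]
  have h1 : (∫ s in (0:ℝ)..(1/2), 2 * |Real.cos (π * s)|) = ∫ s in (0:ℝ)..(1/2), 2 * Real.cos (π * s) := by
    apply intervalIntegral.integral_congr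
    intro s hs
    rw [Set.uIcc_of_le (by norm_num : (0:ℝ) ≤ 1/2)] at hs
    have : 0 ≤ Real.cos (π * s) := by
      apply Real.cos_nonneg_of_mem_Icc
      constructor
      · nlinarith [hs.1, pi_pos]
      · nlinarith [hs.2, pi_pos]
    simp only []
    rw [abs_of_nonneg this]
  have h2 : (∫ s in (1/2:ℝ)..1, 2 * |Real.cos (π * s)|) = ∫ s in (1/2:ℝ)..1, 2 * (-Real.cos (π * s)) := by
    apply intervalIntegral.integral_congr
    intro s hs
    rw [Set.uIcc_of_le (by norm_num : (1/2:ℝ) ≤ 1)] at hs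
    have : Real.cos (π * s) ≤ 0 := by
      apply Real.cos_nonpos_of_pi_div_two_le_of_le
      · nlinarith [hs.1, pi_pos]
      · nlinarith [hs.2, pi_pos]
    simp only []
    rw [abs_of_nonpos this]
  rw [h1, h2]
  simp only [intervalIntegral.integral_const_mul]
  rw [intervalIntegral.integral_neg, integral_cos_pi, integral_cos_pi]
  have : π * (1/2 : ℝ) = π/2 := by ring
  rw [this, mul_one, mul_zero]
  rw [Real.sin_pi, Real.sin_pi_div_two, Real.sin_zero]
  field_simp
  ring

lemma integral_J : (∫ t : AddCircle (1:ℝ), ‖1 + (fourier 1 t : ℂ)‖) = 4 / π := by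
  rw [← AddCircle.integral_preimage 1 0 (fun t : AddCircle (1:ℝ) => ‖1 + (fourier 1 t : ℂ)‖)]
  have : ∀ s ∈ Set.Ioc (0:ℝ) (0+1), ‖1 + (fourier 1 ((s:ℝ) : AddCircle (1:ℝ)) : ℂ)‖
      = 2 * |Real.cos (π * s)| := fun s _ => norm_one_add_fourier_coe s
  rw [setIntegral_congr_fun measurableSet_Ioc this]
  rw [← intervalIntegral.integral_of_le (by norm_num : (0:ℝ) ≤ 0 + 1)]
  rw [show (0:ℝ)+1 = 1 by norm_num, integral_two_abs_cos]

instance instProbPi (n : ℕ) : IsProbabilityMeasure (volume : Measure (Fin n → AddCircle (1:ℝ))) := by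
  constructor; rw [MeasureTheory.volume_pi, Measure.pi_univ]; simp

lemma stepC {d m : ℕ} (e : (Fin m ⊕ Fin m) ≃ Fin d) :
    (∫ x : Fin d → AddCircle (1:ℝ),
      ∏ j : Fin m, ‖(fourier 1 (x (e (Sum.inl j))) : ℂ) + (fourier 1 (x (e (Sum.inr j))) : ℂ)‖)
      = (4/π)^m := by
  classical
  set β := AddCircle (1:ℝ)
  set F : (Fin d → β) → ℝ := fun x =>
    ∏ j : Fin m, ‖(fourier 1 (x (e (Sum.inl j))) : ℂ) + (fourier 1 (x (e (Sum.inr j))) : ℂ)‖ with hF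
  have MP1 : MeasurePreserving (MeasurableEquiv.piCongrLeft (fun _ : Fin d => β) e)
      volume volume := MeasureTheory.volume_measurePreserving_piCongrLeft _ e
  have MP2 : MeasurePreserving
      ((MeasurableEquiv.sumPiEquivProdPi (fun _ : Fin m ⊕ Fin m => β)).symm)
      (volume.prod volume) volume :=
    (MeasureTheory.measurePreserving_sumPiEquivProdPi (fun _ => volume)).symm
  have step1 : (∫ x : Fin d → β, F x)
      = ∫ p : (Fin m → β) × (Fin m → β),
          F ((MeasurableEquiv.piCongrLeft (fun _ : Fin d => β) e)
            ((MeasurableEquiv.sumPiEquivProdPi (fun _ : Fin m ⊕ Fin m => β)).symm p))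
          ∂(volume.prod volume) := by
    rw [MP2.integral_comp'
      (fun w => F ((MeasurableEquiv.piCongrLeft (fun _ : Fin d => β) e) w))]
    exact (MP1.integral_comp' F).symm
  have hsimp : ∀ p : (Fin m → β) × (Fin m → β),
      F ((MeasurableEquiv.piCongrLeft (fun _ : Fin d => β) e)
        ((MeasurableEquiv.sumPiEquivProdPi (fun _ : Fin m ⊕ Fin m => β)).symm p))
      = ∏ j : Fin m, ‖(fourier 1 (p.1 j) : ℂ) + (fourier 1 (p.2 j) : ℂ)‖ := by
    rintro ⟨u, v⟩
    simp only [hF, MeasurableEquiv.coe_sumPiEquivProdPi_symm, MeasurableEquiv.piCongrLeft,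
      MeasurableEquiv.coe_mk, Equiv.piCongrLeft_sumInl, Equiv.piCongrLeft_sumInr]
  simp only [hsimp] at step1
  have hcont : Continuous (fun p : (Fin m → β) × (Fin m → β) =>
      ∏ j : Fin m, ‖(fourier 1 (p.1 j) : ℂ) + (fourier 1 (p.2 j) : ℂ)‖) := by
    apply continuous_finset_prod
    intro j _
    apply Continuous.norm
    exact ((map_continuous (fourier 1)).comp ((continuous_apply j).comp continuous_fst)).add
      ((map_continuous (fourier 1)).comp ((continuous_apply j).comp continuous_snd))
  have hint : Integrable (fun p : (Fin m → β) × (Fin m → β) =>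
      ∏ j : Fin m, ‖(fourier 1 (p.1 j) : ℂ) + (fourier 1 (p.2 j) : ℂ)‖)
      (volume.prod volume) := by
    refine (integrable_const ((2:ℝ)^m)).mono' hcont.aestronglyMeasurable ?_
    filter_upwards with p
    rw [Real.norm_eq_abs, abs_of_nonneg (Finset.prod_nonneg fun j _ => norm_nonneg _)]
    calc ∏ j : Fin m, ‖(fourier 1 (p.1 j) : ℂ) + (fourier 1 (p.2 j) : ℂ)‖
        ≤ ∏ _j : Fin m, (2:ℝ) := by
          apply Finset.prod_le_prod (fun j _ => norm_nonneg _)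
          intro j _
          calc ‖(fourier 1 (p.1 j) : ℂ) + (fourier 1 (p.2 j) : ℂ)‖
              ≤ ‖(fourier 1 (p.1 j) : ℂ)‖ + ‖(fourier 1 (p.2 j) : ℂ)‖ := norm_add_le _ _
            _ = 2 := by rw [norm_fourier_apply, norm_fourier_apply]; norm_num
      _ = (2:ℝ)^m := by rw [Finset.prod_const, Finset.card_univ, Fintype.card_fin]
  rw [step1, MeasureTheory.integral_prod _ hint]
  have inner : ∀ u : Fin m → β,
      (∫ v : Fin m → β, ∏ j : Fin m, ‖(fourier 1 (u j) : ℂ) + (fourier 1 (v j) : ℂ)‖)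
      = (4/π)^m := by
    intro u
    have subst := integral_add_right_eq_self (μ := (volume : Measure (Fin m → β)))
      (fun v : Fin m → β => ∏ j : Fin m, ‖(fourier 1 (u j) : ℂ) + (fourier 1 (v j) : ℂ)‖) u
    rw [← subst]
    have ptwise : ∀ v : Fin m → β,
        (∏ j : Fin m, ‖(fourier 1 (u j) : ℂ) + (fourier 1 ((v + u) j) : ℂ)‖)
        = ∏ j : Fin m, ‖1 + (fourier 1 (v j) : ℂ)‖ := by
      intro v
      apply Finset.prod_congr rfl
      intro j _
      have : ((v + u) j : β) = v j + u j := rfl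
      rw [this, add_comm (v j) (u j), fourier_one_add]
      have : (fourier 1 (u j) : ℂ) + (fourier 1 (u j) : ℂ) * (fourier 1 (v j) : ℂ)
          = (fourier 1 (u j) : ℂ) * (1 + (fourier 1 (v j) : ℂ)) := by ring
      rw [this, norm_mul, norm_fourier_apply, one_mul]
    simp only [ptwise]
    rw [MeasureTheory.volume_pi, MeasureTheory.integral_fintype_prod_eq_pow (ι := Fin m)
      (fun t : β => ‖1 + (fourier 1 t : ℂ)‖), integral_J, Fintype.card_fin]
  simp only [inner]
  rw [MeasureTheory.integral_const]
  simp


lemma torus_eq_vol (d : ℕ) :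
    torusMeasure d = (volume : Measure (Fin d → AddCircle (1:ℝ))) := by
  rw [torusMeasure, MeasureTheory.volume_pi]
  congr 1
  exact funext fun _ => haar_eq_vol

def chiFun {d m : ℕ} (e : (Fin m ⊕ Fin m) ≃ Fin d) (t : Finset (Fin m)) : Fin d → ℕ :=
  fun k => Sum.elim (fun j => if j ∈ t then 1 else 0) (fun j => if j ∈ t then 0 else 1) (e.symm k)

lemma prod_fourier_chi {d m : ℕ} (e : (Fin m ⊕ Fin m) ≃ Fin d) (t : Finset (Fin m))
    (x : Fin d → AddCircle (1:ℝ)) :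
    (∏ k : Fin d, (fourier (-(chiFun e t k : ℤ)) (x k) : ℂ))
    = (∏ j ∈ t, (fourier (-1 : ℤ) (x (e (Sum.inl j))) : ℂ)) *
      (∏ j ∈ Finset.univ \ t, (fourier (-1 : ℤ) (x (e (Sum.inr j))) : ℂ)) := by
  classical
  rw [← Equiv.prod_comp e (fun k => (fourier (-(chiFun e t k : ℤ)) (x k) : ℂ)),
    Fintype.prod_sum_type]
  congr 1
  · rw [← Fintype.prod_ite_mem t (fun j => (fourier (-1 : ℤ) (x (e (Sum.inl j))) : ℂ))]
    apply Finset.prod_congr rfl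
    intro j _
    by_cases hj : j ∈ t <;> simp [chiFun, hj]
  · rw [← Fintype.prod_ite_mem (Finset.univ \ t)
      (fun j => (fourier (-1 : ℤ) (x (e (Sum.inr j))) : ℂ))]
    apply Finset.prod_congr rfl
    intro j _
    by_cases hj : j ∈ t <;> simp [chiFun, hj]

/-- **Lower bound for symbols of the `S_d` Hankel form.** If `φ ∈ L^∞(𝕋^d)`
has `φ̂(χ) = 1` for every `χ ∈ S_d`, then `‖φ‖_{L^∞} ≥ (π/2)^{d/2}`. -/
theorem symbol_norm_lower_bound (d : ℕ) (hd : 2 ≤ d) (hdeven : Even d)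
    (φ : Lp ℂ ⊤ (torusMeasure d))
    (hφ : ∀ χ ∈ Sd d, fourierCoef (⇑φ) (fun j => (χ j : ℤ)) = 1) :
    (π / 2) ^ ((d : ℝ) / 2) ≤ ‖φ‖ := by
  classical
  have hprob : IsProbabilityMeasure (torusMeasure d) := by
    unfold torusMeasure; infer_instance
  have hdm : d = 2 * (d / 2) := by
    obtain ⟨k, hk⟩ := hdeven; omega
  -- the pairing equivalence
  let e : (Fin (d/2) ⊕ Fin (d/2)) ≃ Fin d :=
  { toFun := Sum.elim (fun j => ⟨2 * j.val, by have := j.isLt; omega⟩)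
      (fun j => ⟨2 * j.val + 1, by have := j.isLt; omega⟩)
    invFun := fun k => if k.val % 2 = 0 then Sum.inl ⟨k.val / 2, by have := k.isLt; omega⟩
      else Sum.inr ⟨k.val / 2, by have := k.isLt; omega⟩
    left_inv := by
      rintro (j | j)
      · simp only [Sum.elim_inl]
        simp only [show 2 * j.val % 2 = 0 from by omega, ↓reduceIte]
        exact congrArg Sum.inl (Fin.ext (show 2 * j.val / 2 = j.val by omega))
      · simp only [Sum.elim_inr]
        simp only [show ¬((2 * j.val + 1) % 2 = 0) from by omega, ↓reduceIte]
        exact congrArg Sum.inr (Fin.ext (show (2 * j.val + 1) / 2 = j.val by omega))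
    right_inv := by
      intro k
      dsimp only
      by_cases h : k.val % 2 = 0
      · rw [if_pos h]
        exact Fin.ext (show 2 * (k.val / 2) = k.val by omega)
      · rw [if_neg h]
        exact Fin.ext (show 2 * (k.val / 2) + 1 = k.val by omega) }
  have hsymm0 : ∀ (j : Fin (d/2)) (p : 2 * j.val < d), e.symm ⟨2 * j.val, p⟩ = Sum.inl j := by
    intro j p
    rw [Equiv.symm_apply_eq]
    rfl
  have hsymm1 : ∀ (j : Fin (d/2)) (p : 2 * j.val + 1 < d), e.symm ⟨2 * j.val + 1, p⟩ = Sum.inr j := by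
    intro j p
    rw [Equiv.symm_apply_eq]
    rfl
  -- membership of chiFun in Sd
  have hmem : ∀ t : Finset (Fin (d/2)), chiFun e t ∈ Sd d := by
    intro t
    refine ⟨fun k => ?_, fun j => ?_⟩
    · unfold chiFun
      rcases e.symm k with j | j <;> dsimp <;> split_ifs <;> omega
    · unfold chiFun
      rw [hsymm0 j _, hsymm1 j _]
      by_cases hj : j ∈ t <;> simp [hj]
  -- the test function
  set G : (Fin d → AddCircle (1:ℝ)) → ℂ := fun x =>
    ∏ j : Fin (d/2), ((fourier (-1 : ℤ) (x (e (Sum.inl j))) : ℂ)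
      + (fourier (-1 : ℤ) (x (e (Sum.inr j))) : ℂ)) with hG
  have hGexp : ∀ x, G x = ∑ t ∈ (Finset.univ : Finset (Fin (d/2))).powerset,
      ∏ k : Fin d, (fourier (-(chiFun e t k : ℤ)) (x k) : ℂ) := by
    intro x
    simp only [hG]
    rw [Finset.prod_add]
    exact Finset.sum_congr rfl fun t _ => (prod_fourier_chi e t x).symm
  -- integrability
  have hφint : Integrable (⇑φ) (torusMeasure d) := (Lp.memLp φ).integrable le_top
  have hMcont : ∀ t : Finset (Fin (d/2)),
      Continuous fun x : Fin d → AddCircle (1:ℝ) =>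
        ∏ k : Fin d, (fourier (-(chiFun e t k : ℤ)) (x k) : ℂ) := by
    intro t
    exact continuous_finset_prod _ fun k _ => (map_continuous _).comp (continuous_apply k)
  have hMint : ∀ t : Finset (Fin (d/2)),
      Integrable (fun x => φ x * ∏ k : Fin d, (fourier (-(chiFun e t k : ℤ)) (x k) : ℂ)) (torusMeasure d) := by
    intro t
    have h := hφint.bdd_mul (hMcont t).aestronglyMeasurable
      (c := 1) (Filter.Eventually.of_forall fun x => by
        rw [norm_prod]
        refine le_of_eq (Finset.prod_eq_one fun k _ => ?_)
        exact norm_fourier_apply _ _)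
    exact h.congr (Filter.Eventually.of_forall fun x => mul_comm _ _)
  -- key identity
  have hkey : (∫ x, φ x * G x ∂(torusMeasure d)) = (2 : ℂ) ^ (d/2) := by
    calc (∫ x, φ x * G x ∂(torusMeasure d))
        = ∫ x, ∑ t ∈ (Finset.univ : Finset (Fin (d/2))).powerset,
            φ x * ∏ k : Fin d, (fourier (-(chiFun e t k : ℤ)) (x k) : ℂ) ∂(torusMeasure d) := by
          congr 1
          funext x
          rw [hGexp x, Finset.mul_sum]
      _ = ∑ t ∈ (Finset.univ : Finset (Fin (d/2))).powerset,
            ∫ x, φ x * ∏ k : Fin d, (fourier (-(chiFun e t k : ℤ)) (x k) : ℂ) ∂(torusMeasure d) :=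
          integral_finset_sum _ fun t _ => hMint t
      _ = ∑ t ∈ (Finset.univ : Finset (Fin (d/2))).powerset, (1 : ℂ) :=
          Finset.sum_congr rfl fun t _ => hφ (chiFun e t) (hmem t)
      _ = (2 : ℂ) ^ (d/2) := by
          simp [Finset.card_powerset, Finset.card_univ]
  -- norm of G and its integral
  have hGnorm : ∀ x, ‖G x‖ = ∏ j : Fin (d/2),
      ‖(fourier 1 (x (e (Sum.inl j))) : ℂ) + (fourier 1 (x (e (Sum.inr j))) : ℂ)‖ := by
    intro x
    simp only [hG]
    rw [norm_prod]
    apply Finset.prod_congr rfl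
    intro j _
    rw [fourier_neg, fourier_neg, ← map_add, RCLike.norm_conj]
  have hGC : Continuous G := by
    simp only [hG]
    exact continuous_finset_prod _ fun j _ =>
      ((map_continuous _).comp (continuous_apply _)).add
        ((map_continuous _).comp (continuous_apply _))
  have hGbd : ∀ x, ‖G x‖ ≤ (2:ℝ) ^ (d/2) := by
    intro x
    rw [hGnorm x]
    calc (∏ j : Fin (d/2), ‖(fourier 1 (x (e (Sum.inl j))) : ℂ) + (fourier 1 (x (e (Sum.inr j))) : ℂ)‖)
        ≤ ∏ _j : Fin (d/2), (2:ℝ) := by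
          apply Finset.prod_le_prod (fun j _ => norm_nonneg _)
          intro j _
          calc ‖(fourier 1 (x (e (Sum.inl j))) : ℂ) + (fourier 1 (x (e (Sum.inr j))) : ℂ)‖
              ≤ ‖(fourier 1 (x (e (Sum.inl j))) : ℂ)‖ + ‖(fourier 1 (x (e (Sum.inr j))) : ℂ)‖ :=
                norm_add_le _ _
            _ = 2 := by rw [norm_fourier_apply, norm_fourier_apply]; norm_num
      _ = (2:ℝ) ^ (d/2) := by rw [Finset.prod_const, Finset.card_univ, Fintype.card_fin]
  have hGint : Integrable G (torusMeasure d) :=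
    (integrable_const ((2:ℝ) ^ (d/2))).mono' hGC.aestronglyMeasurable
      (Filter.Eventually.of_forall hGbd)
  have hφGint : Integrable (fun x => φ x * G x) (torusMeasure d) :=
    (hφint.bdd_mul hGC.aestronglyMeasurable (c := (2:ℝ) ^ (d/2)) (Filter.Eventually.of_forall hGbd)).congr
      (Filter.Eventually.of_forall fun x => mul_comm _ _)
  have hGnormInt : (∫ x, ‖G x‖ ∂(torusMeasure d)) = (4/π) ^ (d/2) := by
    rw [torus_eq_vol]
    calc (∫ x : Fin d → AddCircle (1:ℝ), ‖G x‖)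
        = ∫ x : Fin d → AddCircle (1:ℝ), ∏ j : Fin (d/2),
            ‖(fourier 1 (x (e (Sum.inl j))) : ℂ) + (fourier 1 (x (e (Sum.inr j))) : ℂ)‖ := by
          congr 1
          exact funext hGnorm
      _ = (4/π) ^ (d/2) := stepC e
  -- a.e. bound by the L∞ norm
  have hae : ∀ᵐ x ∂(torusMeasure d), ‖φ x‖ ≤ ‖φ‖ := by
    filter_upwards [ae_le_eLpNormEssSup (f := ⇑φ) (μ := torusMeasure d)] with x hx
    have h1 : ((‖φ x‖₊ : NNReal) : ENNReal) ≤ eLpNorm (⇑φ) ⊤ (torusMeasure d) := by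
      rwa [eLpNorm_exponent_top]
    calc ‖φ x‖ = (((‖φ x‖₊ : NNReal) : ENNReal)).toReal := by simp
      _ ≤ (eLpNorm (⇑φ) ⊤ (torusMeasure d)).toReal :=
          ENNReal.toReal_mono (Lp.eLpNorm_ne_top φ) h1
      _ = ‖φ‖ := (Lp.norm_def φ).symm
  -- the main estimate
  have hmain : (2:ℝ) ^ (d/2) ≤ ‖φ‖ * (4/π) ^ (d/2) := by
    have h0 : (2:ℝ) ^ (d/2) = ‖∫ x, φ x * G x ∂(torusMeasure d)‖ := by
      rw [hkey]
      rw [norm_pow]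
      norm_num
    rw [h0]
    calc ‖∫ x, φ x * G x ∂(torusMeasure d)‖
        ≤ ∫ x, ‖φ x * G x‖ ∂(torusMeasure d) := norm_integral_le_integral_norm _
      _ ≤ ∫ x, ‖φ‖ * ‖G x‖ ∂(torusMeasure d) := by
          apply integral_mono_ae hφGint.norm (hGint.norm.const_mul ‖φ‖)
          filter_upwards [hae] with x hx
          rw [norm_mul]
          exact mul_le_mul_of_nonneg_right hx (norm_nonneg _)
      _ = ‖φ‖ * ∫ x, ‖G x‖ ∂(torusMeasure d) := integral_const_mul _ _
      _ = ‖φ‖ * (4/π) ^ (d/2) := by rw [hGnormInt]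
  -- conclude
  have h4pos : (0:ℝ) < (4/π) ^ (d/2) := pow_pos (by positivity) _
  have hππ : (π/2 : ℝ) ^ (d/2) * (4/π) ^ (d/2) = (2:ℝ) ^ (d/2) := by
    rw [← mul_pow]
    congr 1
    field_simp
    ring
  have hfin : (π/2 : ℝ) ^ (d/2) ≤ ‖φ‖ := by
    have := hππ.trans_le hmain
    exact le_of_mul_le_mul_right this h4pos
  have hcast : ((d:ℝ)/2) = ((d/2 : ℕ) : ℝ) := by
    have : (d:ℝ) = 2 * ((d/2 : ℕ) : ℝ) := by
      rw [hdm]; push_cast; ring_nf; norm_cast; omega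
    rw [this]; ring
  rw [hcast, Real.rpow_natCast]
  exact hfin
end

section
/- The best Nehari constants are nondecreasing in the dimension: for every positive integer d, C_d ≤ C_{d+1}. Concretely: suppose C ≥ 0 is such that for every finitely supported ρ : ℕ^{d+1} → ℂ and M ≥ 0 with |∑_{α,β ∈ ℕ^{d+1}} ρ(α+β) a(α) b(β)| ≤ M ‖a‖_{ℓ²} ‖b‖_{ℓ²} for all finitely supported a, b : ℕ^{d+1} → ℂ, there exists φ ∈ L^∞(𝕋^{d+1}) with φ̂(α) = ρ(α) for all α ∈ ℕ^{d+1} and ‖φ‖_{L^∞} ≤ C·M. Then C has the same property in dimension d: for every finitely supported ρ' : ℕ^d → ℂ and M' ≥ 0 with |∑_{α,β ∈ ℕ^d} ρ'(α+β) a(α) b(β)| ≤ M' ‖a‖_{ℓ²} ‖b‖_{ℓ²} for all finitely supported a, b : ℕ^d → ℂ, there exists φ' ∈ L^∞(𝕋^d) with φ̂'(α) = ρ'(α) for all α ∈ ℕ^d and ‖φ'‖_{L^∞} ≤ C·M'. -/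
open MeasureTheory Real

/-- The Hankel bilinear form `(a, b) ↦ ∑_{α,β} ρ(α+β) a(α) b(β)` with symbol
coefficients `ρ`. -/
noncomputable def hankelSum {d : ℕ} (ρ : (Fin d → ℕ) →₀ ℂ) (a b : (Fin d → ℕ) →₀ ℂ) : ℂ :=
  ∑ α ∈ a.support, ∑ β ∈ b.support, ρ (α + β) * a α * b β

namespace NehariAux


instance (d : ℕ) : IsProbabilityMeasure (torusMeasure d) := by
  unfold torusMeasure; infer_instance

variable {d : ℕ}

def snocEmb (d : ℕ) : (Fin d → ℕ) ↪ (Fin (d + 1) → ℕ) :=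
  ⟨fun α => Fin.snoc α 0, fun α β hab => funext fun j => by
    have := congrFun hab (Fin.castSucc j); simpa using this⟩

@[simp] lemma snocEmb_apply (α : Fin d → ℕ) : snocEmb d α = Fin.snoc α 0 := rfl

lemma snocEmb_last (α : Fin d → ℕ) : snocEmb d α (Fin.last d) = 0 := by simp

lemma snocEmb_add (α β : Fin d → ℕ) : snocEmb d α + snocEmb d β = snocEmb d (α + β) := by
  funext j
  refine Fin.lastCases ?_ (fun i => ?_) j <;>
    simp [Fin.snoc_last, Fin.snoc_castSucc]

/-- restriction of a finsupp on `ℕ^{d+1}` to the slice `last = 0`. -/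
noncomputable def restr (a : (Fin (d + 1) → ℕ) →₀ ℂ) : (Fin d → ℕ) →₀ ℂ :=
  Finsupp.comapDomain (snocEmb d) a ((snocEmb d).injective.injOn)

@[simp] lemma restr_apply (a : (Fin (d + 1) → ℕ) →₀ ℂ) (α : Fin d → ℕ) :
    restr a α = a (snocEmb d α) := rfl

lemma map_restr_support (a : (Fin (d + 1) → ℕ) →₀ ℂ) :
    (restr a).support.map (snocEmb d)
      = a.support.filter (fun γ => γ (Fin.last d) = 0) := by
  ext γ
  simp only [Finset.mem_map, Finsupp.mem_support_iff, restr_apply, Finset.mem_filter]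
  constructor
  · rintro ⟨α, hα, rfl⟩
    exact ⟨hα, snocEmb_last α⟩
  · rintro ⟨hγ, hlast⟩
    refine ⟨fun i => γ (Fin.castSucc i), ?_, ?_⟩
    · have : snocEmb d (fun i => γ (Fin.castSucc i)) = γ := by
        funext j
        refine Fin.lastCases ?_ (fun i => ?_) j <;>
          simp [hlast, Fin.snoc_last, Fin.snoc_castSucc]
      rw [this]; exact hγ
    · funext j
      refine Fin.lastCases ?_ (fun i => ?_) j <;>
        simp [hlast, Fin.snoc_last, Fin.snoc_castSucc]

lemma embDomain_eq_zero (ρ' : (Fin d → ℕ) →₀ ℂ) {γ : Fin (d + 1) → ℕ}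
    (hγ : γ (Fin.last d) ≠ 0) : ρ'.embDomain (snocEmb d) γ = 0 := by
  refine Finsupp.embDomain_notin_range _ _ _ ?_
  rintro ⟨α, rfl⟩
  exact hγ (snocEmb_last α)

lemma hankel_eq (ρ' : (Fin d → ℕ) →₀ ℂ) (a b : (Fin (d + 1) → ℕ) →₀ ℂ) :
    hankelSum (ρ'.embDomain (snocEmb d)) a b = hankelSum ρ' (restr a) (restr b) := by
  set ρ := ρ'.embDomain (snocEmb d) with hρ
  set P : (Fin (d + 1) → ℕ) → Prop := fun γ => γ (Fin.last d) = 0 with hP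
  have key : ∀ (α β : Fin (d + 1) → ℕ), ¬ P α ∨ ¬ P β → ρ (α + β) = 0 := by
    rintro α β (hα | hβ) <;>
    · apply embDomain_eq_zero
      simp only [Pi.add_apply]
      omega
  have step1 : hankelSum ρ a b =
      ∑ α ∈ a.support.filter P, ∑ β ∈ b.support.filter P, ρ (α + β) * a α * b β := by
    unfold hankelSum
    rw [← Finset.sum_subset (Finset.filter_subset P a.support)]
    · refine Finset.sum_congr rfl fun α _ => ?_
      rw [← Finset.sum_subset (Finset.filter_subset P b.support)]
      intro β _ hβ
      rw [key α β (Or.inr (fun hPβ => hβ (Finset.mem_filter.2 ⟨‹_›, hPβ⟩)))]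
      ring
    · intro α hα hα'
      refine Finset.sum_eq_zero fun β _ => ?_
      rw [key α β (Or.inl (fun hPα => hα' (Finset.mem_filter.2 ⟨hα, hPα⟩)))]
      ring
  rw [step1, ← map_restr_support a, ← map_restr_support b]
  rw [Finset.sum_map]
  unfold hankelSum
  refine Finset.sum_congr rfl fun α _ => ?_
  rw [Finset.sum_map]
  refine Finset.sum_congr rfl fun β _ => ?_
  simp only [Function.Embedding.coeFn_mk, restr_apply]
  rw [hρ, snocEmb_add, Finsupp.embDomain_apply_self]

lemma l2_restr_le (a : (Fin (d + 1) → ℕ) →₀ ℂ) : l2norm (restr a) ≤ l2norm a := by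
  unfold l2norm
  apply Real.sqrt_le_sqrt
  have : ∑ α ∈ (restr a).support, ‖restr a α‖ ^ 2
      = ∑ γ ∈ (restr a).support.map (snocEmb d), ‖a γ‖ ^ 2 := by
    rw [Finset.sum_map]; rfl
  rw [this]
  refine Finset.sum_le_sum_of_subset_of_nonneg ?_ (fun γ _ _ => by positivity)
  rw [map_restr_support a]
  exact Finset.filter_subset _ _

lemma l2norm_nonneg (a : (Fin d → ℕ) →₀ ℂ) : 0 ≤ l2norm a := Real.sqrt_nonneg _



local notation "X" => AddCircle (1 : ℝ)

lemma norm_fourier (n : ℤ) (x : X) : ‖fourier n x‖ = 1 := by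
  simp [fourier, Circle.norm_coe]

lemma exists_slice (d : ℕ) (φ : Lp ℂ ⊤ (torusMeasure (d + 1))) :
    ∃ φ' : Lp ℂ ⊤ (torusMeasure d), ‖φ'‖ ≤ ‖φ‖ ∧
      ∀ α : Fin d → ℤ, fourierCoef (⇑φ') α = fourierCoef (⇑φ) (Fin.snoc α 0) := by
  classical
  have hK0 : (0:ℝ) ≤ ‖φ‖ := norm_nonneg _
  -- a.e. bound for φ
  have hess : eLpNormEssSup (⇑φ) (torusMeasure (d + 1)) ≠ ⊤ := by
    rw [← eLpNorm_exponent_top]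
    exact Lp.eLpNorm_ne_top φ
  have hbd : ∀ᵐ y ∂(torusMeasure (d + 1)), ‖(⇑φ : (Fin (d+1) → X) → ℂ) y‖ ≤ ‖φ‖ := by
    filter_upwards [ae_le_eLpNormEssSup (f := ⇑φ) (μ := torusMeasure (d + 1))] with y hy
    have h2 := ENNReal.toReal_mono hess hy
    simpa [Lp.norm_def, eLpNorm_exponent_top] using h2
  -- measurable bounded representative g
  set f : (Fin (d + 1) → X) → ℂ := (Lp.aestronglyMeasurable φ).mk ⇑φ with hfdef
  have hf_sm : StronglyMeasurable f := (Lp.aestronglyMeasurable φ).stronglyMeasurable_mk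
  have hfeq : ⇑φ =ᵐ[torusMeasure (d + 1)] f := (Lp.aestronglyMeasurable φ).ae_eq_mk
  set g : (Fin (d + 1) → X) → ℂ := fun y => if ‖f y‖ ≤ ‖φ‖ then f y else 0 with hg
  have hg_sm : StronglyMeasurable g := by
    refine StronglyMeasurable.ite ?_ hf_sm stronglyMeasurable_const
    exact measurableSet_le hf_sm.norm.measurable measurable_const
  have hg_bd : ∀ y, ‖g y‖ ≤ ‖φ‖ := by
    intro y
    rw [hg]
    simp only
    split_ifs with hy
    · exact hy
    · simpa using hK0
  have hgφ : ⇑φ =ᵐ[torusMeasure (d + 1)] g := by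
    filter_upwards [hfeq, hbd] with y h1 h2
    rw [hg]
    simp only
    rw [if_pos (h1 ▸ h2)]
    exact h1
  -- measure-preserving equivalence
  set E : (X × (Fin d → X)) ≃ᵐ (Fin (d + 1) → X) :=
    (MeasurableEquiv.piFinSuccAbove (fun _ => X) (Fin.last d)).symm with hE
  have hEmp : MeasurePreserving E
      (AddCircle.haarAddCircle.prod (torusMeasure d)) (torusMeasure (d + 1)) :=
    MeasurePreserving.symm _
      (measurePreserving_piFinSuccAbove (fun _ : Fin (d + 1) => AddCircle.haarAddCircle)
        (Fin.last d))
  have hEapp : ∀ (t : X) (x : Fin d → X), E (t, x) = Fin.snoc x t := by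
    intro t x
    show (Fin.insertNthEquiv (fun _ => X) (Fin.last d)) (t, x) = _
    simp [Fin.insertNthEquiv, Fin.insertNth_last']
  -- the slice function
  set ψ : (Fin d → X) → ℂ := fun x => ∫ t, g (E (t, x)) ∂AddCircle.haarAddCircle with hψ
  have hGE_sm : StronglyMeasurable (fun p : X × (Fin d → X) => g (E p)) :=
    hg_sm.comp_measurable E.measurable
  have hψ_sm : StronglyMeasurable ψ := hGE_sm.integral_prod_left'
  have hψ_bd : ∀ x, ‖ψ x‖ ≤ ‖φ‖ := by
    intro x
    calc ‖ψ x‖ ≤ ‖φ‖ * ((AddCircle.haarAddCircle : Measure X) Set.univ).toReal :=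
          norm_integral_le_of_norm_le_const (Filter.Eventually.of_forall fun t => hg_bd _)
      _ = ‖φ‖ := by simp
  have hmem : MemLp ψ ⊤ (torusMeasure d) :=
    memLp_top_of_bound hψ_sm.aestronglyMeasurable ‖φ‖ (Filter.Eventually.of_forall hψ_bd)
  refine ⟨hmem.toLp ψ, ?_, ?_⟩
  · rw [Lp.norm_toLp]
    refine ENNReal.toReal_le_of_le_ofReal hK0 ?_
    rw [eLpNorm_exponent_top]
    exact eLpNormEssSup_le_of_ae_bound (Filter.Eventually.of_forall hψ_bd)
  · intro α
    set Pr : (Fin d → X) → ℂ := fun x => ∏ j, fourier (-(α j)) (x j) with hPr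
    have hPr_sm : StronglyMeasurable Pr := by
      apply Finset.stronglyMeasurable_fun_prod
      intro j _
      exact ((fourier (-(α j))).continuous.measurable.comp
        (measurable_pi_apply j)).stronglyMeasurable
    have hPr_norm : ∀ x, ‖Pr x‖ = 1 := by
      intro x
      rw [hPr]
      simp only [norm_prod]
      exact Finset.prod_eq_one fun j _ => norm_fourier _ _
    set F : X × (Fin d → X) → ℂ := fun p => g (E p) * Pr p.2 with hF
    have hF_sm : StronglyMeasurable F :=
      hGE_sm.mul (hPr_sm.comp_measurable measurable_snd)
    have hF_int : Integrable F (AddCircle.haarAddCircle.prod (torusMeasure d)) := by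
      refine MemLp.integrable le_top (memLp_top_of_bound hF_sm.aestronglyMeasurable ‖φ‖
        (Filter.Eventually.of_forall fun p => ?_))
      rw [hF]
      simp only [norm_mul]
      rw [hPr_norm]
      simpa using hg_bd (E p)
    have key : ∀ (t : X) (x : Fin d → X),
        (g (E (t, x))) * (∏ j, fourier (-((Fin.snoc α 0 : Fin (d+1) → ℤ) j)) (E (t, x) j))
          = F (t, x) := by
      intro t x
      rw [hEapp]
      show _ = g (E (t, x)) * Pr x
      rw [hEapp]
      congr 1
      rw [Fin.prod_univ_castSucc]
      have hlast : (Fin.snoc α (0:ℤ) : Fin (d+1) → ℤ) (Fin.last d) = 0 := Fin.snoc_last _ _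
      have hlast2 : (Fin.snoc x t : Fin (d+1) → X) (Fin.last d) = t := Fin.snoc_last _ _
      rw [hlast, hlast2, neg_zero, fourier_zero, mul_one]
      refine Finset.prod_congr rfl fun i _ => ?_
      rw [Fin.snoc_castSucc, Fin.snoc_castSucc]
    calc fourierCoef (⇑(hmem.toLp ψ)) α
        = ∫ x, ψ x * Pr x ∂(torusMeasure d) := by
          refine integral_congr_ae ?_
          filter_upwards [hmem.coeFn_toLp] with x hx
          rw [hx]
      _ = ∫ x, ∫ t, F (t, x) ∂AddCircle.haarAddCircle ∂(torusMeasure d) := by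
          refine integral_congr_ae (Filter.Eventually.of_forall fun x => ?_)
          rw [hψ]
          simp only
          rw [← integral_mul_const]
      _ = ∫ t, ∫ x, F (t, x) ∂(torusMeasure d) ∂AddCircle.haarAddCircle :=
          (integral_integral_swap (f := fun t x => F (t, x)) hF_int).symm
      _ = ∫ p, F p ∂(AddCircle.haarAddCircle.prod (torusMeasure d)) := integral_integral hF_int
      _ = ∫ y, g y * ∏ j, fourier (-((Fin.snoc α 0 : Fin (d+1) → ℤ) j)) (y j)
            ∂(torusMeasure (d + 1)) := by
          rw [← hEmp.integral_comp E.measurableEmbedding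
            (fun y => g y * ∏ j, fourier (-((Fin.snoc α 0 : Fin (d+1) → ℤ) j)) (y j))]
          refine integral_congr_ae (Filter.Eventually.of_forall fun p => ?_)
          rw [← key p.1 p.2]
      _ = fourierCoef (⇑φ) (Fin.snoc α 0) := by
          refine integral_congr_ae ?_
          filter_upwards [hgφ] with y hy
          rw [hy]


end NehariAux

open NehariAux

/-- **Monotonicity of the Nehari constants: `C_d ≤ C_{d+1}`.** If `C ≥ 0` has the
Nehari property in dimension `d + 1` (every Hankel form with coefficients `ρ` and
norm bound `M` has a bounded symbol `φ ∈ L^∞(𝕋^{d+1})` with `φ̂ = ρ` on `ℕ^{d+1}`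
and `‖φ‖_∞ ≤ C·M`), then `C` has the same property in dimension `d`. -/
theorem nehari_constant_mono (d : ℕ) (hd : 0 < d) (C : ℝ) (hC : 0 ≤ C)
    (h : ∀ (ρ : (Fin (d + 1) → ℕ) →₀ ℂ) (M : ℝ), 0 ≤ M →
      (∀ a b : (Fin (d + 1) → ℕ) →₀ ℂ,
        ‖hankelSum ρ a b‖ ≤ M * l2norm a * l2norm b) →
      ∃ φ : Lp ℂ ⊤ (torusMeasure (d + 1)),
        (∀ α : Fin (d + 1) → ℕ, fourierCoef (⇑φ) (fun j => (α j : ℤ)) = ρ α) ∧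
        ‖φ‖ ≤ C * M) :
    ∀ (ρ' : (Fin d → ℕ) →₀ ℂ) (M' : ℝ), 0 ≤ M' →
      (∀ a b : (Fin d → ℕ) →₀ ℂ,
        ‖hankelSum ρ' a b‖ ≤ M' * l2norm a * l2norm b) →
      ∃ φ' : Lp ℂ ⊤ (torusMeasure d),
        (∀ α : Fin d → ℕ, fourierCoef (⇑φ') (fun j => (α j : ℤ)) = ρ' α) ∧
        ‖φ'‖ ≤ C * M' := by
  intro ρ' M' hM' hbound
  have hb : ∀ a b : (Fin (d + 1) → ℕ) →₀ ℂ,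
      ‖hankelSum (ρ'.embDomain (snocEmb d)) a b‖ ≤ M' * l2norm a * l2norm b := by
    intro a b
    rw [hankel_eq]
    calc ‖hankelSum ρ' (restr a) (restr b)‖
        ≤ M' * l2norm (restr a) * l2norm (restr b) := hbound _ _
      _ ≤ M' * l2norm a * l2norm b := by
          apply mul_le_mul _ (l2_restr_le b) (l2norm_nonneg _)
          · exact mul_nonneg hM' (l2norm_nonneg _)
          · exact mul_le_mul_of_nonneg_left (l2_restr_le a) hM'
  obtain ⟨φ, hφc, hφn⟩ := h (ρ'.embDomain (snocEmb d)) M' hM' hb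
  obtain ⟨φ', hn', hc'⟩ := exists_slice d φ
  refine ⟨φ', ?_, hn'.trans hφn⟩
  intro α
  rw [hc' (fun j => (α j : ℤ))]
  have hcast : (Fin.snoc (fun j => (α j : ℤ)) 0 : Fin (d + 1) → ℤ)
      = fun j => ((snocEmb d α j : ℕ) : ℤ) := by
    funext j
    refine Fin.lastCases ?_ (fun i => ?_) j <;>
      simp [Fin.snoc_last, Fin.snoc_castSucc]
  rw [hcast, hφc (snocEmb d α), Finsupp.embDomain_apply_self]
end
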